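/- arXiv:math/0312353 — 7 statements merged into one kernel-verified Lean document; each statement's English description precedes it below -/
import Mathlib

section
/- Let γ : [0,1] → ℂ be a closed piecewise continuously differentiable curve and let g be a complex polynomial. Then for every t ∈ ℂ not lying on the image of γ, (1/(2πi)) ∫₀¹ g(γ(s)) γ'(s)/(γ(s) − t) ds = μ(γ,t) · g(t), where μ(γ,t) = (1/(2πi)) ∫₀¹ γ'(s)/(γ(s) − t) ds is the winding number of γ around t. -/
open MeasureTheory Set

/-- A curve `γ : ℝ → ℂ` (considered on `[0,1]`) is piecewise continuously differentiable
with (piecewise) derivative `γ'`. -/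
def PiecewiseC1 (γ γ' : ℝ → ℂ) : Prop :=
  ContinuousOn γ (Set.Icc 0 1) ∧
  IntervalIntegrable γ' MeasureTheory.volume 0 1 ∧
  ∃ S : Finset ℝ,
    (∀ s ∈ Set.Icc (0:ℝ) 1 \ S, HasDerivWithinAt γ (γ' s) (Set.Icc 0 1) s) ∧
    ContinuousOn γ' (Set.Icc (0:ℝ) 1 \ S)

/-- The winding number of a closed curve `γ` around a point `w` not on its image. -/
noncomputable def windingNumber (γ γ' : ℝ → ℂ) (w : ℂ) : ℂ :=
  (1 / (2 * Real.pi * Complex.I)) * ∫ s in (0:ℝ)..1, γ' s / (γ s - w)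

/-- The Cauchy type integral `I(γ,g,t)`. -/
noncomputable def cauchyTypeIntegral (γ γ' : ℝ → ℂ) (g : ℂ → ℂ) (t : ℂ) : ℂ :=
  (1 / (2 * Real.pi * Complex.I)) * ∫ s in (0:ℝ)..1, g (γ s) * γ' s / (γ s - t)

lemma exists_polynomial_antideriv (q : Polynomial ℂ) :
    ∃ Q : Polynomial ℂ, Q.derivative = q := by
  induction q using Polynomial.induction_on' with
  | add p r hp hr =>
    obtain ⟨P, hP⟩ := hp
    obtain ⟨R, hR⟩ := hr
    exact ⟨P + R, by simp [hP, hR]⟩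
  | monomial n a =>
    refine ⟨Polynomial.C (a / (n + 1)) * Polynomial.X ^ (n + 1), ?_⟩
    have hn : ((n : ℂ) + 1) ≠ 0 := Nat.cast_add_one_ne_zero n
    rw [Polynomial.derivative_C_mul, Polynomial.derivative_X_pow, Nat.add_sub_cancel,
      ← mul_assoc, ← Polynomial.C_mul]
    push_cast
    rw [div_mul_cancel₀ _ hn, ← Polynomial.smul_X_eq_monomial, Polynomial.smul_eq_C_mul]

theorem stmt0 (γ γ' : ℝ → ℂ) (hγ : PiecewiseC1 γ γ') (hclosed : γ 0 = γ 1)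
    (g : Polynomial ℂ) (t : ℂ) (ht : t ∉ γ '' Set.Icc 0 1) :
    cauchyTypeIntegral γ γ' (fun z => g.eval z) t = windingNumber γ γ' t * g.eval t := by
  obtain ⟨hcont, hint, S, hderiv, hcont'⟩ := hγ
  have hne : ∀ s ∈ Set.Icc (0:ℝ) 1, γ s - t ≠ 0 := fun s hs h =>
    ht ⟨s, hs, sub_eq_zero.mp h⟩
  -- factor g - g(t) = (X - t) * q
  obtain ⟨q, hq⟩ := Polynomial.X_sub_C_dvd_sub_C_eval (a := t) (p := g)
  have heval : ∀ z : ℂ, g.eval z = g.eval t + (z - t) * q.eval z := by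
    intro z
    have h := congrArg (Polynomial.eval z) hq
    simp only [Polynomial.eval_sub, Polynomial.eval_mul, Polynomial.eval_X,
      Polynomial.eval_C] at h
    linear_combination h
  obtain ⟨Q, hQ⟩ := exists_polynomial_antideriv q
  have huIcc : Set.uIcc (0:ℝ) 1 = Set.Icc 0 1 := by
    rw [Set.uIcc_of_le]; norm_num
  -- integrability of the two pieces
  have hi1 : IntervalIntegrable (fun s => (γ s - t)⁻¹ * γ' s) volume 0 1 := by
    apply hint.continuousOn_mul
    rw [huIcc]
    exact ((hcont.sub continuousOn_const).inv₀ hne)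
  have hi2 : IntervalIntegrable (fun s => q.eval (γ s) * γ' s) volume 0 1 := by
    apply hint.continuousOn_mul
    rw [huIcc]
    exact q.continuous_aeval.comp_continuousOn hcont
  -- FTC: ∫ q(γ s) γ' s = 0
  have hftc : (∫ s in (0:ℝ)..1, q.eval (γ s) * γ' s) = 0 := by
    have h := MeasureTheory.integral_eq_of_hasDerivAt_off_countable_of_le
      (fun s => Q.eval (γ s)) (fun s => q.eval (γ s) * γ' s) (by norm_num : (0:ℝ) ≤ 1)
      S.finite_toSet.countable
      (Q.continuous_aeval.comp_continuousOn hcont) ?_ hi2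
    · rw [h]; simp [hclosed]
    · intro x hx
      have hx1 : x ∈ Set.Icc (0:ℝ) 1 \ S := ⟨Set.Ioo_subset_Icc_self hx.1, hx.2⟩
      have hγd : HasDerivAt γ (γ' x) x :=
        (hderiv x hx1).hasDerivAt (Icc_mem_nhds hx.1.1 hx.1.2)
      have := (Q.hasDerivAt (γ x)).comp x hγd
      rwa [hQ] at this
  -- rewrite the integrand
  have hcong : (∫ s in (0:ℝ)..1, g.eval (γ s) * γ' s / (γ s - t))
      = ∫ s in (0:ℝ)..1, (Polynomial.eval t g * ((γ s - t)⁻¹ * γ' s)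
          + q.eval (γ s) * γ' s) := by
    apply intervalIntegral.integral_congr
    intro s hs
    rw [huIcc] at hs
    have h0 := hne s hs
    show Polynomial.eval (γ s) g * γ' s / (γ s - t) = _
    rw [heval (γ s)]
    field_simp
  have hsplit : (∫ s in (0:ℝ)..1, (Polynomial.eval t g * ((γ s - t)⁻¹ * γ' s)
      + q.eval (γ s) * γ' s))
      = Polynomial.eval t g * ∫ s in (0:ℝ)..1, (γ s - t)⁻¹ * γ' s := by
    rw [intervalIntegral.integral_add (hi1.const_mul _) hi2, hftc, add_zero,
      intervalIntegral.integral_const_mul]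
  have hdivinv : (∫ s in (0:ℝ)..1, γ' s / (γ s - t))
      = ∫ s in (0:ℝ)..1, (γ s - t)⁻¹ * γ' s := by
    apply intervalIntegral.integral_congr
    intro s _
    simp only [div_eq_inv_mul]
  simp only [cauchyTypeIntegral, windingNumber, hcong, hsplit, hdivinv]
  ring
end

section
/- Let z₁,…,z_l ∈ ℂ be distinct, let k₁,…,k_l ≥ 1 be integers, let α_{i,j} ∈ ℂ (1 ≤ i ≤ l, 1 ≤ j ≤ k_i), let g₀ be a complex polynomial, and let g be the rational function g(z) = g₀(z) + Σ_{i=1}^l R_i(z), where R_i(z) = Σ_{j=1}^{k_i} α_{i,j}/(z − z_i)^j is the essential (principal) part of g at z_i. Let γ : [0,1] → ℂ be a closed piecewise continuously differentiable curve whose image avoids z₁,…,z_l. Then for every t ∈ ℂ lying neither on the image of γ nor in {z₁,…,z_l}: I(γ,g,t) = μ(γ,t) g(t) − Σ_{i=1}^l μ(γ,z_i) R_i(t). -/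
open MeasureTheory Set

/-- Partial fraction identity. -/
lemma pfrac (α a t : ℂ) (hat : t - a ≠ 0) : ∀ (j : ℕ) (w : ℂ), w - a ≠ 0 → w - t ≠ 0 →
    (α / (w - a) ^ j) / (w - t) =
      (α / (t - a) ^ j) / (w - t) +
        ∑ m ∈ Finset.range j, (-(α / (t - a) ^ (j - m))) * (((w - a) ^ (m + 1))⁻¹) := by
  intro j
  induction j with
  | zero => intro w haw hwt; simp
  | succ n ih =>
    intro w haw hwt
    have hta : (t - a) ^ n ≠ 0 := pow_ne_zero _ hat
    have base : (1 / (w - a)) * (α / (t - a) ^ n / (w - t)) =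
        α / (t - a) ^ (n + 1) / (w - t) +
          (-(α / (t - a) ^ (n + 1 - 0))) * (((w - a) ^ (0 + 1))⁻¹) := by
      simp only [Nat.sub_zero, zero_add, pow_one]
      field_simp
      try ring
      try tauto
    calc α / (w - a) ^ (n + 1) / (w - t)
        = (1 / (w - a)) * (α / (w - a) ^ n / (w - t)) := by
          simp only [pow_succ, div_eq_mul_inv, mul_inv]; ring
      _ = (1 / (w - a)) * (α / (t - a) ^ n / (w - t)) +
          ∑ m ∈ Finset.range n,
            (1 / (w - a)) * ((-(α / (t - a) ^ (n - m))) * (((w - a) ^ (m + 1))⁻¹)) := by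
          rw [ih w haw hwt, mul_add, Finset.mul_sum]
      _ = (α / (t - a) ^ (n + 1) / (w - t) +
            (-(α / (t - a) ^ (n + 1 - 0))) * (((w - a) ^ (0 + 1))⁻¹)) +
          ∑ m ∈ Finset.range n,
            (-(α / (t - a) ^ (n + 1 - (m + 1)))) * (((w - a) ^ ((m + 1) + 1))⁻¹) := by
          rw [base]
          congr 1
          refine Finset.sum_congr rfl fun m _ => ?_
          rw [Nat.succ_sub_succ, pow_succ (w - a) (m + 1), mul_inv]
          ring
      _ = α / (t - a) ^ (n + 1) / (w - t) +
          ∑ m ∈ Finset.range (n + 1),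
            (-(α / (t - a) ^ (n + 1 - m))) * (((w - a) ^ (m + 1))⁻¹) := by
          rw [Finset.sum_range_succ']
          ring

/-- Integrability of `h(γ s) * γ' s` for `h` continuous on the image of the curve. -/
lemma intble (γ γ' : ℝ → ℂ) (hγ : PiecewiseC1 γ γ') {h : ℂ → ℂ}
    (hh : ContinuousOn h (γ '' Set.Icc 0 1)) :
    IntervalIntegrable (fun s => h (γ s) * γ' s) volume 0 1 := by
  apply hγ.2.1.continuousOn_mul
  rw [Set.uIcc_of_le (zero_le_one : (0:ℝ) ≤ 1)]
  exact hh.comp hγ.1 (Set.mapsTo_image γ _)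

/-- FTC along a piecewise-C¹ curve. -/
lemma curve_ftc (γ γ' : ℝ → ℂ) (hγ : PiecewiseC1 γ γ')
    (F f : ℂ → ℂ) (U : Set ℂ) (hU : IsOpen U)
    (hsub : ∀ s ∈ Set.Icc (0:ℝ) 1, γ s ∈ U)
    (hF : ∀ w ∈ U, HasDerivAt F (f w) w) (hf : ContinuousOn f U) :
    ∫ s in (0:ℝ)..1, f (γ s) * γ' s = F (γ 1) - F (γ 0) := by
  have himg : γ '' Set.Icc 0 1 ⊆ U := by rintro w ⟨s, hs, rfl⟩; exact hsub s hs
  have hint : IntervalIntegrable (fun s => f (γ s) * γ' s) volume 0 1 :=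
    intble γ γ' hγ (hf.mono himg)
  obtain ⟨hc, hi, S, hd, -⟩ := hγ
  have hFc : ContinuousOn F U := fun w hw => (hF w hw).continuousAt.continuousWithinAt
  have hcomp : ContinuousOn (fun s => F (γ s)) (Set.uIcc (0:ℝ) 1) := by
    rw [Set.uIcc_of_le (zero_le_one : (0:ℝ) ≤ 1)]
    exact hFc.comp hc hsub
  have hder : ∀ x ∈ Set.Ioo (min (0:ℝ) 1) (max 0 1) \ (S : Set ℝ),
      HasDerivAt (fun s => F (γ s)) (f (γ x) * γ' x) x := by
    intro x hx
    rw [min_eq_left zero_le_one, max_eq_right (zero_le_one : (0:ℝ) ≤ 1)] at hx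
    have hxI : x ∈ Set.Icc (0:ℝ) 1 := Set.Ioo_subset_Icc_self hx.1
    have hγx : HasDerivAt γ (γ' x) x :=
      (hd x ⟨hxI, hx.2⟩).hasDerivAt (Icc_mem_nhds hx.1.1 hx.1.2)
    exact (hF (γ x) (hsub x hxI)).comp x hγx
  have := MeasureTheory.integral_eq_of_hasDerivAt_off_countable
    (fun s => F (γ s)) (fun s => f (γ s) * γ' s) (s := (S : Set ℝ))
    (S.countable_toSet) hcomp hder hint
  simpa using this

set_option maxHeartbeats 1000000 in
/-- Integral of a polynomial along a closed curve vanishes. -/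
lemma poly_closed (γ γ' : ℝ → ℂ) (hγ : PiecewiseC1 γ γ') (hclosed : γ 0 = γ 1)
    (p : Polynomial ℂ) :
    ∫ s in (0:ℝ)..1, p.eval (γ s) * γ' s = 0 := by
  induction p using Polynomial.induction_on' with
  | add p q hp hq =>
    have h1 : IntervalIntegrable (fun s => p.eval (γ s) * γ' s) volume 0 1 :=
      intble γ γ' hγ (h := fun w => p.eval w) p.continuous.continuousOn
    have h2 : IntervalIntegrable (fun s => q.eval (γ s) * γ' s) volume 0 1 :=
      intble γ γ' hγ (h := fun w => q.eval w) q.continuous.continuousOn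
    simp only [Polynomial.eval_add, add_mul]
    rw [intervalIntegral.integral_add h1 h2, hp, hq, add_zero]
  | monomial n a =>
    have hd : ∀ w ∈ Set.univ, HasDerivAt (fun w : ℂ => ((n : ℂ) + 1)⁻¹ * a * w ^ (n + 1))
        (a * w ^ n) w := by
      intro w _
      have hn : ((n : ℂ) + 1) ≠ 0 := Nat.cast_add_one_ne_zero n
      have h := (hasDerivAt_pow (n + 1) w).const_mul (((n : ℂ) + 1)⁻¹ * a)
      have e : ((n : ℂ) + 1)⁻¹ * a * (((n : ℕ) + 1 : ℕ) * w ^ (n + 1 - 1)) = a * w ^ n := by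
        have h1 : n + 1 - 1 = n := rfl
        rw [h1]
        push_cast
        field_simp
      rw [← e]
      exact h
    have key := curve_ftc γ γ' hγ
      (fun w => ((n : ℂ) + 1)⁻¹ * a * w ^ (n + 1)) (fun w => a * w ^ n) Set.univ
      isOpen_univ (fun s _ => Set.mem_univ _) hd
      ((continuous_const.mul (continuous_pow n)).continuousOn)
    simp only [Polynomial.eval_monomial]
    rw [key, hclosed, sub_self]


/-- Integral of `(γ-a)^{-(n+2)} γ'` along a closed curve avoiding `a` vanishes. -/
lemma invpow_closed (γ γ' : ℝ → ℂ) (hγ : PiecewiseC1 γ γ') (hclosed : γ 0 = γ 1)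
    (a : ℂ) (ha : ∀ s ∈ Set.Icc (0:ℝ) 1, γ s ≠ a) (n : ℕ) :
    ∫ s in (0:ℝ)..1, ((γ s - a) ^ (n + 2))⁻¹ * γ' s = 0 := by
  have hn : (-(n : ℂ) - 1) ≠ 0 := by
    have := Nat.cast_add_one_ne_zero (R := ℂ) n
    intro h
    apply this
    linear_combination -h
  have hd : ∀ w ∈ ({a}ᶜ : Set ℂ),
      HasDerivAt (fun w : ℂ => (-(n : ℂ) - 1)⁻¹ * (w - a) ^ (-(n:ℤ) - 1))
      (((w - a) ^ (n + 2))⁻¹) w := by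
    intro w hw
    have hw' : w - a ≠ 0 := sub_ne_zero.mpr hw
    have h1 : HasDerivAt (fun w : ℂ => w - a) 1 w := (hasDerivAt_id w).sub_const a
    have h2 : HasDerivAt (fun x : ℂ => x ^ (-(n:ℤ) - 1))
        (((-(n:ℤ) - 1 : ℤ) : ℂ) * (w - a) ^ (-(n:ℤ) - 1 - 1)) (w - a) :=
      hasDerivAt_zpow _ _ (Or.inl hw')
    have h3 := (h2.comp w h1).const_mul ((-(n : ℂ) - 1)⁻¹)
    have e : (-(n : ℂ) - 1)⁻¹ * (((-(n:ℤ) - 1 : ℤ) : ℂ) * (w - a) ^ (-(n:ℤ) - 1 - 1) * 1)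
        = ((w - a) ^ (n + 2))⁻¹ := by
      have hz : (-(n:ℤ) - 1 - 1) = -((n + 2 : ℕ) : ℤ) := by push_cast; ring
      rw [hz, zpow_neg, zpow_natCast, mul_one]
      have hc : ((-(n:ℤ) - 1 : ℤ) : ℂ) = -(n : ℂ) - 1 := by push_cast; ring
      rw [hc, inv_mul_cancel_left₀ hn]
    rw [← e]
    exact h3
  have hcont : ContinuousOn (fun w : ℂ => ((w - a) ^ (n + 2))⁻¹) ({a}ᶜ : Set ℂ) := by
    apply ContinuousOn.inv₀
    · exact ((continuousOn_id.sub continuousOn_const).pow _)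
    · intro w hw
      exact pow_ne_zero _ (sub_ne_zero.mpr hw)
  have key := curve_ftc γ γ' hγ
    (fun w : ℂ => (-(n : ℂ) - 1)⁻¹ * (w - a) ^ (-(n:ℤ) - 1))
    (fun w : ℂ => ((w - a) ^ (n + 2))⁻¹) ({a}ᶜ : Set ℂ)
    isOpen_compl_singleton (fun s hs => ha s hs) hd hcont
  rw [key, hclosed, sub_self]


set_option maxHeartbeats 1000000 in
theorem stmt1 (l : ℕ) (z : Fin l → ℂ) (hz : Function.Injective z)
    (k : Fin l → ℕ) (hk : ∀ i, 1 ≤ k i) (α : Fin l → ℕ → ℂ) (g₀ : Polynomial ℂ)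
    (R : Fin l → ℂ → ℂ)
    (hR : ∀ i w, R i w = ∑ j ∈ Finset.Icc 1 (k i), α i j / (w - z i) ^ j)
    (g : ℂ → ℂ) (hg : ∀ w, g w = g₀.eval w + ∑ i, R i w)
    (γ γ' : ℝ → ℂ) (hγ : PiecewiseC1 γ γ') (hclosed : γ 0 = γ 1)
    (havoid : ∀ i, z i ∉ γ '' Set.Icc 0 1)
    (t : ℂ) (ht : t ∉ γ '' Set.Icc 0 1) (ht' : ∀ i, t ≠ z i) :
    cauchyTypeIntegral γ γ' g t =
      windingNumber γ γ' t * g t - ∑ i, windingNumber γ γ' (z i) * R i t := by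
  have hts : ∀ s ∈ Set.Icc (0:ℝ) 1, γ s - t ≠ 0 := fun s hs =>
    sub_ne_zero.mpr (fun h => ht ⟨s, hs, h⟩)
  have his : ∀ i, ∀ s ∈ Set.Icc (0:ℝ) 1, γ s - z i ≠ 0 := fun i s hs =>
    sub_ne_zero.mpr (fun h => havoid i ⟨s, hs, h⟩)
  have hti : ∀ i, t - z i ≠ 0 := fun i => sub_ne_zero.mpr (ht' i)
  obtain ⟨q, hq⟩ := Polynomial.X_sub_C_dvd_sub_C_eval (a := t) (p := g₀)
  have hqe : ∀ w, Polynomial.eval w g₀ = (w - t) * Polynomial.eval w q + Polynomial.eval t g₀ := by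
    intro w
    have h2 := congrArg (Polynomial.eval w) hq
    simp only [Polynomial.eval_sub, Polynomial.eval_mul, Polynomial.eval_X,
      Polynomial.eval_C] at h2
    linear_combination h2
  -- scalar partial fraction identity
  have key : ∀ w : ℂ, w - t ≠ 0 → (∀ i, w - z i ≠ 0) →
      g w / (w - t) = g t / (w - t) + Polynomial.eval w q +
        ∑ i, ∑ j ∈ Finset.Icc 1 (k i), ∑ m ∈ Finset.range j,
          (-(α i j / (t - z i) ^ (j - m))) * (((w - z i) ^ (m + 1))⁻¹) := by
    intro w hwt hwi
    have hpoly : Polynomial.eval w g₀ / (w - t) =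
        Polynomial.eval t g₀ / (w - t) + Polynomial.eval w q := by
      rw [hqe w]
      field_simp
      ring
    have hrat : ∀ i, R i w / (w - t) = R i t / (w - t) +
        ∑ j ∈ Finset.Icc 1 (k i), ∑ m ∈ Finset.range j,
          (-(α i j / (t - z i) ^ (j - m))) * (((w - z i) ^ (m + 1))⁻¹) := by
      intro i
      rw [hR i w, hR i t, Finset.sum_div, Finset.sum_div, ← Finset.sum_add_distrib]
      refine Finset.sum_congr rfl fun j _ => ?_
      exact pfrac (α i j) (z i) t (hti i) j w (hwi i) hwt
    have hsum : ∑ i, R i w / (w - t) = ∑ i, (R i t / (w - t) +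
        ∑ j ∈ Finset.Icc 1 (k i), ∑ m ∈ Finset.range j,
          (-(α i j / (t - z i) ^ (j - m))) * (((w - z i) ^ (m + 1))⁻¹)) :=
      Finset.sum_congr rfl fun i _ => hrat i
    rw [hg w, hg t, add_div, add_div, Finset.sum_div, Finset.sum_div, hpoly, hsum,
      Finset.sum_add_distrib]
    ring
  -- membership helpers on the image
  have htm : ∀ w ∈ γ '' Set.Icc 0 1, w - t ≠ 0 := by
    rintro w ⟨s, hs, rfl⟩; exact hts s hs
  have him : ∀ i, ∀ w ∈ γ '' Set.Icc 0 1, w - z i ≠ 0 := by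
    rintro i w ⟨s, hs, rfl⟩; exact his i s hs
  -- integrability of the pieces
  have hI1 : IntervalIntegrable (fun s => (γ s - t)⁻¹ * γ' s) volume 0 1 := by
    refine intble γ γ' hγ (h := fun w => (w - t)⁻¹) ?_
    exact (continuousOn_id.sub continuousOn_const).inv₀ (fun w hw => htm w hw)
  have hI2 : IntervalIntegrable (fun s => Polynomial.eval (γ s) q * γ' s) volume 0 1 :=
    intble γ γ' hγ (h := fun w => Polynomial.eval w q) q.continuous.continuousOn
  have hJint : ∀ (i : Fin l) (m : ℕ),
      IntervalIntegrable (fun s => ((γ s - z i) ^ (m + 1))⁻¹ * γ' s) volume 0 1 := by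
    intro i m
    refine intble γ γ' hγ (h := fun w => ((w - z i) ^ (m + 1))⁻¹) ?_
    exact ((continuousOn_id.sub continuousOn_const).pow _).inv₀
      (fun w hw => pow_ne_zero _ (him i w hw))
  have hterm : ∀ (i : Fin l) (j m : ℕ),
      IntervalIntegrable (fun s =>
        (-(α i j / (t - z i) ^ (j - m))) * (((γ s - z i) ^ (m + 1))⁻¹ * γ' s)) volume 0 1 :=
    fun i j m => (hJint i m).const_mul _
  have hinner : ∀ (i : Fin l) (j : ℕ),
      IntervalIntegrable (fun s => ∑ m ∈ Finset.range j,
        (-(α i j / (t - z i) ^ (j - m))) * (((γ s - z i) ^ (m + 1))⁻¹ * γ' s)) volume 0 1 := by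
    intro i j
    have := IntervalIntegrable.sum (μ := volume) (a := (0:ℝ)) (b := 1) (Finset.range j)
      (f := fun m => fun s =>
        (-(α i j / (t - z i) ^ (j - m))) * (((γ s - z i) ^ (m + 1))⁻¹ * γ' s))
      (fun m _ => hterm i j m)
    convert this using 1
    · rfl
    funext s
    simp only [Finset.sum_apply]
  have hmid : ∀ (i : Fin l),
      IntervalIntegrable (fun s => ∑ j ∈ Finset.Icc 1 (k i), ∑ m ∈ Finset.range j,
        (-(α i j / (t - z i) ^ (j - m))) * (((γ s - z i) ^ (m + 1))⁻¹ * γ' s)) volume 0 1 := by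
    intro i
    have := IntervalIntegrable.sum (μ := volume) (a := (0:ℝ)) (b := 1) (Finset.Icc 1 (k i))
      (f := fun j => fun s => ∑ m ∈ Finset.range j,
        (-(α i j / (t - z i) ^ (j - m))) * (((γ s - z i) ^ (m + 1))⁻¹ * γ' s))
      (fun j _ => hinner i j)
    convert this using 1
    · rfl
    funext s
    simp only [Finset.sum_apply]
  have houter : IntervalIntegrable (fun s => ∑ i, ∑ j ∈ Finset.Icc 1 (k i),
      ∑ m ∈ Finset.range j,
        (-(α i j / (t - z i) ^ (j - m))) * (((γ s - z i) ^ (m + 1))⁻¹ * γ' s)) volume 0 1 := by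
    have := IntervalIntegrable.sum (μ := volume) (a := (0:ℝ)) (b := 1) (Finset.univ : Finset (Fin l))
      (f := fun i => fun s => ∑ j ∈ Finset.Icc 1 (k i), ∑ m ∈ Finset.range j,
        (-(α i j / (t - z i) ^ (j - m))) * (((γ s - z i) ^ (m + 1))⁻¹ * γ' s))
      (fun i _ => hmid i)
    convert this using 1
    · rfl
    funext s
    simp only [Finset.sum_apply]
  -- pointwise identity for the integrand
  have hpt : Set.EqOn (fun s => g (γ s) * γ' s / (γ s - t))
      (fun s => g t * ((γ s - t)⁻¹ * γ' s) + Polynomial.eval (γ s) q * γ' s +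
        ∑ i, ∑ j ∈ Finset.Icc 1 (k i), ∑ m ∈ Finset.range j,
          (-(α i j / (t - z i) ^ (j - m))) * (((γ s - z i) ^ (m + 1))⁻¹ * γ' s))
      (Set.uIcc (0:ℝ) 1) := by
    intro s hs
    rw [Set.uIcc_of_le (zero_le_one : (0:ℝ) ≤ 1)] at hs
    have h1 := key (γ s) (hts s hs) (fun i => his i s hs)
    dsimp only
    calc g (γ s) * γ' s / (γ s - t) = (g (γ s) / (γ s - t)) * γ' s := by ring
      _ = (g t / (γ s - t) + Polynomial.eval (γ s) q +
            ∑ i, ∑ j ∈ Finset.Icc 1 (k i), ∑ m ∈ Finset.range j,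
              (-(α i j / (t - z i) ^ (j - m))) * (((γ s - z i) ^ (m + 1))⁻¹)) * γ' s := by
          rw [h1]
      _ = _ := by
          rw [add_mul, add_mul, Finset.sum_mul]
          congr 1
          · congr 1
            ring
          · refine Finset.sum_congr rfl fun i _ => ?_
            rw [Finset.sum_mul]
            refine Finset.sum_congr rfl fun j _ => ?_
            rw [Finset.sum_mul]
            refine Finset.sum_congr rfl fun m _ => ?_
            ring
  -- value of the inner integrals
  have hJ : ∀ (i : Fin l) (m : ℕ),
      (∫ s in (0:ℝ)..1, ((γ s - z i) ^ (m + 1))⁻¹ * γ' s) =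
        if m = 0 then (∫ s in (0:ℝ)..1, γ' s / (γ s - z i)) else 0 := by
    intro i m
    cases m with
    | zero =>
      rw [if_pos rfl]
      refine intervalIntegral.integral_congr fun s _ => ?_
      rw [zero_add, pow_one]
      ring
    | succ p =>
      rw [if_neg (Nat.succ_ne_zero p)]
      exact invpow_closed γ γ' hγ hclosed (z i)
        (fun s hs => sub_ne_zero.mp (his i s hs)) p
  -- compute the total integral
  have hIval : (∫ s in (0:ℝ)..1, g (γ s) * γ' s / (γ s - t)) =
      g t * (∫ s in (0:ℝ)..1, γ' s / (γ s - t)) +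
        ∑ i, -(R i t * (∫ s in (0:ℝ)..1, γ' s / (γ s - z i))) := by
    rw [intervalIntegral.integral_congr hpt]
    rw [intervalIntegral.integral_add ((hI1.const_mul (g t)).add hI2) houter,
      intervalIntegral.integral_add (hI1.const_mul (g t)) hI2]
    rw [intervalIntegral.integral_const_mul]
    rw [poly_closed γ γ' hγ hclosed q, add_zero]
    have e1 : (∫ s in (0:ℝ)..1, (γ s - t)⁻¹ * γ' s) =
        ∫ s in (0:ℝ)..1, γ' s / (γ s - t) := by
      refine intervalIntegral.integral_congr fun s _ => ?_
      ring
    rw [e1]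
    congr 1
    rw [intervalIntegral.integral_finset_sum (fun i _ => hmid i)]
    refine Finset.sum_congr rfl fun i _ => ?_
    rw [intervalIntegral.integral_finset_sum (fun j _ => hinner i j)]
    have step : ∀ j ∈ Finset.Icc 1 (k i),
        (∫ s in (0:ℝ)..1, ∑ m ∈ Finset.range j,
          (-(α i j / (t - z i) ^ (j - m))) * (((γ s - z i) ^ (m + 1))⁻¹ * γ' s)) =
        -(α i j / (t - z i) ^ j) * (∫ s in (0:ℝ)..1, γ' s / (γ s - z i)) := by
      intro j hj
      rw [intervalIntegral.integral_finset_sum (fun m _ => hterm i j m)]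
      have e2 : ∀ m ∈ Finset.range j,
          (∫ s in (0:ℝ)..1,
            (-(α i j / (t - z i) ^ (j - m))) * (((γ s - z i) ^ (m + 1))⁻¹ * γ' s)) =
          (-(α i j / (t - z i) ^ (j - m))) *
            (if m = 0 then (∫ s in (0:ℝ)..1, γ' s / (γ s - z i)) else 0) := by
        intro m _
        rw [intervalIntegral.integral_const_mul, hJ i m]
      rw [Finset.sum_congr rfl e2]
      have h0mem : (0 : ℕ) ∈ Finset.range j := by
        rw [Finset.mem_range]
        exact lt_of_lt_of_le Nat.zero_lt_one (Finset.mem_Icc.mp hj).1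
      rw [Finset.sum_eq_single_of_mem 0 h0mem (fun m _ hm => by rw [if_neg hm, mul_zero])]
      rw [if_pos rfl, Nat.sub_zero]
    rw [Finset.sum_congr rfl step]
    simp only [neg_mul]
    rw [Finset.sum_neg_distrib, ← Finset.sum_mul, ← hR i t]
  -- assemble
  rw [cauchyTypeIntegral, hIval]
  simp only [windingNumber]
  rw [mul_add, Finset.mul_sum]
  have hsum2 : ∑ i, 1 / (2 * Real.pi * Complex.I) *
        -(R i t * (∫ s in (0:ℝ)..1, γ' s / (γ s - z i))) =
      -∑ i, (1 / (2 * Real.pi * Complex.I) * (∫ s in (0:ℝ)..1, γ' s / (γ s - z i))) * R i t := by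
    rw [← Finset.sum_neg_distrib]
    refine Finset.sum_congr rfl fun i _ => ?_
    ring
  rw [hsum2]
  ring
end

section
/- Let g(z) = g₀(z) + Σ_{i=1}^l R_i(z) be a rational function, where g₀ is a complex polynomial, z₁,…,z_l ∈ ℂ are distinct, and each essential part R_i(z) = Σ_{j=1}^{k_i} α_{i,j}/(z − z_i)^j is not identically zero (for each i some α_{i,j} ≠ 0). Let γ : [0,1] → ℂ be a closed piecewise continuously differentiable curve whose image avoids z₁,…,z_l. Then: (i) if μ(γ,z_i) = 0 for every i (all poles of g lie in the outside part of γ), then I(γ,g,t) = μ(γ,t) g(t) for every t lying neither on the image of γ nor in {z₁,…,z_l}; and (ii) there exists ρ > 0 such that I(γ,g,t) = 0 for all |t| > ρ if and only if μ(γ,z_i) = 0 for every i. -/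
open MeasureTheory Set intervalIntegral

theorem ftc_finset_aux (n : ℕ) : ∀ (S : Finset ℝ), S.card ≤ n → ∀ (f f' : ℝ → ℂ) (a b : ℝ),
    a ≤ b → ContinuousOn f (Icc a b) →
    (∀ x ∈ Ioo a b, x ∉ S → HasDerivWithinAt f (f' x) (Ioi x) x) →
    IntervalIntegrable f' volume a b →
    ∫ y in a..b, f' y = f b - f a := by
  induction n with
  | zero =>
    intro S hS f f' a b hab hcont hderiv hint
    exact integral_eq_sub_of_hasDeriv_right_of_le hab hcont
      (fun x hx => hderiv x hx (by simp [Finset.card_eq_zero.mp (Nat.le_zero.mp hS)])) hint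
  | succ n ih =>
    intro S hS f f' a b hab hcont hderiv hint
    by_cases h : ∃ c ∈ S, c ∈ Ioo a b
    · obtain ⟨c, hcS, hc⟩ := h
      have hac : a ≤ c := hc.1.le
      have hcb : c ≤ b := hc.2.le
      have hint1 : IntervalIntegrable f' volume a c :=
        hint.mono_set (by rw [uIcc_of_le hac, uIcc_of_le hab]; exact Icc_subset_Icc le_rfl hcb)
      have hint2 : IntervalIntegrable f' volume c b :=
        hint.mono_set (by rw [uIcc_of_le hcb, uIcc_of_le hab]; exact Icc_subset_Icc hac le_rfl)
      have hcard : (S.erase c).card ≤ n := by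
        have := Finset.card_erase_of_mem hcS
        omega
      have h1 : ∫ y in a..c, f' y = f c - f a :=
        ih (S.erase c) hcard f f' a c hac (hcont.mono (Icc_subset_Icc le_rfl hcb))
          (fun x hx hxS => hderiv x (Ioo_subset_Ioo le_rfl hcb hx)
            (fun hxmem => hxS (Finset.mem_erase.mpr ⟨hx.2.ne, hxmem⟩))) hint1
      have h2 : ∫ y in c..b, f' y = f b - f c :=
        ih (S.erase c) hcard f f' c b hcb (hcont.mono (Icc_subset_Icc hac le_rfl))
          (fun x hx hxS => hderiv x (Ioo_subset_Ioo hac le_rfl hx)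
            (fun hxmem => hxS (Finset.mem_erase.mpr ⟨hx.1.ne', hxmem⟩))) hint2
      rw [← integral_add_adjacent_intervals hint1 hint2, h1, h2]
      ring
    · exact integral_eq_sub_of_hasDeriv_right_of_le hab hcont
        (fun x hx => hderiv x hx (fun hxS => h ⟨x, hxS, hx⟩)) hint

theorem ftc_finset (S : Finset ℝ) (f f' : ℝ → ℂ) (a b : ℝ)
    (hab : a ≤ b) (hcont : ContinuousOn f (Icc a b))
    (hderiv : ∀ x ∈ Ioo a b, x ∉ S → HasDerivWithinAt f (f' x) (Ioi x) x)
    (hint : IntervalIntegrable f' volume a b) :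
    ∫ y in a..b, f' y = f b - f a :=
  ftc_finset_aux S.card S le_rfl f f' a b hab hcont hderiv hint

theorem curve_integrable (γ γ' : ℝ → ℂ) (hγ : PiecewiseC1 γ γ') (f : ℂ → ℂ) (U : Set ℂ)
    (him : ∀ s ∈ Icc (0:ℝ) 1, γ s ∈ U) (hf : ContinuousOn f U) :
    IntervalIntegrable (fun s => f (γ s) * γ' s) volume 0 1 := by
  obtain ⟨hγc, hγ'i, S, hd, _⟩ := hγ
  have : ContinuousOn (fun s => f (γ s)) (Icc (0:ℝ) 1) := hf.comp hγc him
  have := hγ'i.continuousOn_mul (g := fun s => f (γ s)) (by rwa [uIcc_of_le zero_le_one])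
  exact this

/-- The integral of a derivative along a closed piecewise-C1 curve vanishes. -/

theorem closed_curve_integral_deriv (γ γ' : ℝ → ℂ) (hγ : PiecewiseC1 γ γ') (hclosed : γ 0 = γ 1)
    (F f : ℂ → ℂ) (U : Set ℂ) (him : ∀ s ∈ Icc (0:ℝ) 1, γ s ∈ U)
    (hF : ∀ w ∈ U, HasDerivAt F (f w) w) (hf : ContinuousOn f U) :
    ∫ s in (0:ℝ)..1, f (γ s) * γ' s = 0 := by
  have hint := curve_integrable γ γ' hγ f U him hf
  obtain ⟨hγc, hγ'i, S, hd, _⟩ := hγ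
  have hFc : ContinuousOn F U := fun w hw => (hF w hw).continuousAt.continuousWithinAt
  have hcont : ContinuousOn (F ∘ γ) (Icc (0:ℝ) 1) := hFc.comp hγc him
  have hderiv : ∀ s ∈ Ioo (0:ℝ) 1, s ∉ S →
      HasDerivWithinAt (F ∘ γ) (f (γ s) * γ' s) (Ioi s) s := by
    intro s hs hsS
    have hγat : HasDerivAt γ (γ' s) s :=
      (hd s ⟨Ioo_subset_Icc_self hs, hsS⟩).hasDerivAt (Icc_mem_nhds hs.1 hs.2)
    exact ((hF (γ s) (him s (Ioo_subset_Icc_self hs))).comp s hγat).hasDerivWithinAt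
  have := ftc_finset S (F ∘ γ) (fun s => f (γ s) * γ' s) 0 1 zero_le_one hcont hderiv hint
  rw [this, Function.comp_apply, Function.comp_apply, hclosed, sub_self]

theorem winding_far (γ γ' : ℝ → ℂ) (hγ : PiecewiseC1 γ γ') (hclosed : γ 0 = γ 1) (M : ℝ)
    (hM : ∀ s ∈ Icc (0:ℝ) 1, ‖γ s‖ ≤ M) (t : ℂ) (ht : M < ‖t‖) :
    ∫ s in (0:ℝ)..1, γ' s / (γ s - t) = 0 := by
  have ht0 : t ≠ 0 := by
    intro h; rw [h] at ht; simp at ht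
    exact absurd (le_trans (norm_nonneg _) (hM 0 (by norm_num))) (not_le.mpr ht)
  have key : ∀ w ∈ Metric.ball (0:ℂ) (‖t‖),
      HasDerivAt (fun w => Complex.log (1 - w / t)) ((w - t)⁻¹) w := by
    intro w hw
    have hwt : ‖w‖ < ‖t‖ := by simpa using hw
    have hne : w ≠ t := fun h => absurd (h ▸ hwt) (lt_irrefl _)
    have hmem : 1 - w / t ∈ Complex.slitPlane := by
      left
      have h1 : (1 - w / t).re = 1 - (w / t).re := by simp
      have h2 : (w / t).re ≤ ‖(w / t)‖ := Complex.re_le_norm _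
      have h3 : ‖(w / t)‖ < 1 := by
        rw [norm_div, div_lt_one (lt_of_le_of_lt (norm_nonneg w) hwt)]
        exact hwt
      rw [h1]; linarith
    have hinner : HasDerivAt (fun w : ℂ => 1 - w / t) (-t⁻¹) w := by
      simpa using ((hasDerivAt_id w).div_const t).const_sub 1
    have := (Complex.hasDerivAt_log hmem).comp w hinner
    refine this.congr_deriv ?_
    have h4 : 1 - w / t ≠ 0 := Complex.slitPlane_ne_zero hmem
    have h5 : t - w ≠ 0 := sub_ne_zero.mpr (fun h => hne (h.symm))
    have h6 : w - t ≠ 0 := sub_ne_zero.mpr hne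
    rw [show (1 : ℂ) - w / t = (t - w) / t by field_simp, inv_div]
    field_simp
    ring
  have h0 := closed_curve_integral_deriv γ γ' hγ hclosed _ (fun w => (w - t)⁻¹)
    (Metric.ball (0:ℂ) (‖t‖)) ?_ key ?_
  · rw [← h0]
    exact intervalIntegral.integral_congr fun s hs => by rw [div_eq_mul_inv, mul_comm]
  · intro s hs
    simp only [Metric.mem_ball, Complex.dist_eq, sub_zero]
    exact lt_of_le_of_lt (hM s hs) ht
  · apply ContinuousOn.inv₀ ((continuous_id.sub continuous_const).continuousOn)
    intro w hw
    have hwt : ‖w‖ < ‖t‖ := by simpa [Complex.dist_eq] using hw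
    exact sub_ne_zero.mpr (fun h => absurd ((show w = t from h) ▸ hwt) (lt_irrefl _))

/-- primitive of `(w-a)^{-(m+2)}` away from `a` -/

theorem hasDerivAt_inv_pow (a : ℂ) (m : ℕ) (w : ℂ) (hw : w ≠ a) :
    HasDerivAt (fun w => (-((m:ℂ)+1)⁻¹) * ((w - a) ^ (m+1))⁻¹) (((w - a) ^ (m+2))⁻¹) w := by
  have hne : w - a ≠ 0 := sub_ne_zero.mpr hw
  have h1 : HasDerivAt (fun w : ℂ => (w - a) ^ (m+1))
      ((m+1 : ℂ) * (w - a) ^ m) w := by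
    have := ((hasDerivAt_id w).sub_const a).pow (m+1)
    simpa [Pi.pow_def] using this
  have h2 := (h1.inv (pow_ne_zero _ hne)).const_mul (-((m:ℂ)+1)⁻¹)
  refine h2.congr_deriv ?_
  have hm1 : (m:ℂ) + 1 ≠ 0 := by
    have : ((m+1 : ℕ) : ℂ) ≠ 0 := Nat.cast_ne_zero.mpr (Nat.succ_ne_zero m)
    push_cast at this; exact this
  field_simp
  ring

theorem prim_poly (p : Polynomial ℂ) : ∃ F : ℂ → ℂ, ∀ w, HasDerivAt F (p.eval w) w := by
  induction p using Polynomial.induction_on' with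
  | add p q hp hq =>
    obtain ⟨F, hF⟩ := hp
    obtain ⟨G, hG⟩ := hq
    exact ⟨F + G, fun w => by simpa using (hF w).add (hG w)⟩
  | monomial n a =>
    refine ⟨fun w => a / ((n:ℂ)+1) * w ^ (n+1), fun w => ?_⟩
    have hn : (n:ℂ) + 1 ≠ 0 := by
      have : ((n+1 : ℕ) : ℂ) ≠ 0 := Nat.cast_ne_zero.mpr (Nat.succ_ne_zero n)
      push_cast at this; exact this
    have := (hasDerivAt_pow (n+1) w).const_mul (a / ((n:ℂ)+1))
    refine this.congr_deriv ?_
    rw [Polynomial.eval_monomial]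
    push_cast
    field_simp

theorem frac_identity (A B b c : ℂ) (hA : A ≠ 0) (hB : B ≠ 0) (hb : b ≠ 0) (hc : c ≠ 0)
    (hbc : b + c ≠ 0) :
    ((A*(b+c))*c)⁻¹ - ((B*b)*c)⁻¹ + ((B*b)*(b+c))⁻¹ =
      b⁻¹ * ((A*c)⁻¹ - (B*c)⁻¹ + (B*(b+c))⁻¹) + (-b⁻¹) * (A*(b+c))⁻¹ := by
  have key : ∀ X : ℂ, X ≠ 0 → (X*c)⁻¹ - (X*(b+c))⁻¹ = b * (X * (c*(b+c)))⁻¹ := by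
    intro X hX
    rw [mul_inv X c, mul_inv X (b+c), ← mul_sub, inv_sub_inv hc hbc,
        show b + c - c = b by ring, mul_inv X (c*(b+c)), div_eq_mul_inv]
    ring
  have h1 := key A hA
  have h2 := key B hB
  have h3 := key (B*b) (mul_ne_zero hB hb)
  have e1 : ((A*(b+c))*c)⁻¹ = (A * (c*(b+c)))⁻¹ := by ring_nf
  have e3 : b * ((B*b) * (c*(b+c)))⁻¹ = (B * (c*(b+c)))⁻¹ := by
    rw [show (B*b) * (c*(b+c)) = b * (B * (c*(b+c))) by ring, mul_inv,
        mul_inv_cancel_left₀ hb]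
  calc ((A*(b+c))*c)⁻¹ - ((B*b)*c)⁻¹ + ((B*b)*(b+c))⁻¹
      = (A*(c*(b+c)))⁻¹ - (((B*b)*c)⁻¹ - ((B*b)*(b+c))⁻¹) := by rw [e1]; ring
    _ = (A*(c*(b+c)))⁻¹ - (B*(c*(b+c)))⁻¹ := by rw [h3, e3]
    _ = b⁻¹ * (b * (A*(c*(b+c)))⁻¹) - b⁻¹ * (b * (B*(c*(b+c)))⁻¹) := by
          rw [inv_mul_cancel_left₀ hb, inv_mul_cancel_left₀ hb]
    _ = b⁻¹ * ((A*c)⁻¹ - (A*(b+c))⁻¹) - b⁻¹ * ((B*c)⁻¹ - (B*(b+c))⁻¹) := by rw [h1, h2]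
    _ = b⁻¹ * ((A*c)⁻¹ - (B*c)⁻¹ + (B*(b+c))⁻¹) + (-b⁻¹) * (A*(b+c))⁻¹ := by ring

/-- primitive of the partial-fraction remainder -/

theorem primP (z t : ℂ) (hzt : t ≠ z) (m : ℕ) : ∃ F : ℂ → ℂ, ∀ w, w ≠ z → w ≠ t →
    HasDerivAt F (((w-z)^(m+1) * (w-t))⁻¹ - ((t-z)^(m+1) * (w-t))⁻¹
      + ((t-z)^(m+1) * (w-z))⁻¹) w := by
  have htz : t - z ≠ 0 := sub_ne_zero.mpr hzt
  induction m with
  | zero =>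
    refine ⟨fun _ => 0, fun w hwz hwt => ?_⟩
    have h1 : w - z ≠ 0 := sub_ne_zero.mpr hwz
    have h2 : w - t ≠ 0 := sub_ne_zero.mpr hwt
    have : ((w-z)^1 * (w-t))⁻¹ - ((t-z)^1 * (w-t))⁻¹ + ((t-z)^1 * (w-z))⁻¹ = 0 := by
      field_simp
      ring
    rw [this]
    exact hasDerivAt_const w 0
  | succ m ih =>
    obtain ⟨F, hF⟩ := ih
    refine ⟨fun w => (t-z)⁻¹ * F w
      + (-(t-z)⁻¹) * ((-((m:ℂ)+1)⁻¹) * ((w - z) ^ (m+1))⁻¹), fun w hwz hwt => ?_⟩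
    have h1 : w - z ≠ 0 := sub_ne_zero.mpr hwz
    have h2 : w - t ≠ 0 := sub_ne_zero.mpr hwt
    have hd := ((hF w hwz hwt).const_mul ((t-z)⁻¹)).add
      ((hasDerivAt_inv_pow z m w hwz).const_mul (-(t-z)⁻¹))
    refine hd.congr_deriv ?_
    have hA : (w-z)^(m+1) ≠ 0 := pow_ne_zero _ h1
    have hB : (t-z)^(m+1) ≠ 0 := pow_ne_zero _ htz
    have hkey := frac_identity ((w-z)^(m+1)) ((t-z)^(m+1)) (t-z) (w-t) hA hB htz h2
      (by rw [show t - z + (w - t) = w - z by ring]; exact h1)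
    rw [show t - z + (w - t) = w - z by ring] at hkey
    rw [show m+2 = (m+1)+1 from rfl, pow_succ ((w:ℂ)-z) (m+1), pow_succ ((t:ℂ)-z) (m+1)]
    convert hkey.symm using 3

theorem prim_sum {ι : Type*} (s : Finset ι) (f : ι → ℂ → ℂ) (U : Set ℂ)
    (h : ∀ i ∈ s, ∃ F : ℂ → ℂ, ∀ w ∈ U, HasDerivAt F (f i w) w) :
    ∃ F : ℂ → ℂ, ∀ w ∈ U, HasDerivAt F (∑ i ∈ s, f i w) w := by
  classical
  induction s using Finset.induction_on with
  | empty => exact ⟨fun _ => 0, fun w _ => by simpa using hasDerivAt_const w (0:ℂ)⟩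
  | insert a s' hnotmem ih =>
    obtain ⟨F, hF⟩ := h a (Finset.mem_insert_self a s')
    obtain ⟨G, hG⟩ := ih (fun i hi => h i (Finset.mem_insert_of_mem hi))
    refine ⟨F + G, fun w hw => ?_⟩
    rw [Finset.sum_insert hnotmem]
    exact (hF w hw).add (hG w hw)

theorem key_identity (l : ℕ) (z : Fin l → ℂ)
    (k : Fin l → ℕ) (α : Fin l → ℕ → ℂ) (g₀ : Polynomial ℂ)
    (R : Fin l → ℂ → ℂ)
    (hR : ∀ i w, R i w = ∑ j ∈ Finset.Icc 1 (k i), α i j / (w - z i) ^ j)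
    (g : ℂ → ℂ) (hg : ∀ w, g w = g₀.eval w + ∑ i, R i w)
    (γ γ' : ℝ → ℂ) (hγ : PiecewiseC1 γ γ') (hclosed : γ 0 = γ 1)
    (havoid : ∀ i, z i ∉ γ '' Set.Icc 0 1)
    (t : ℂ) (ht : t ∉ γ '' Set.Icc 0 1) (hti : ∀ i, t ≠ z i) :
    (∫ s in (0:ℝ)..1, g (γ s) * γ' s / (γ s - t)) =
      g t * (∫ s in (0:ℝ)..1, γ' s / (γ s - t))
        - ∑ i, R i t * (∫ s in (0:ℝ)..1, γ' s / (γ s - z i)) := by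
  classical
  set U : Set ℂ := (insert t (Set.range z))ᶜ with hU
  have hUopen : IsOpen U := ((Set.finite_range z).insert t).isClosed.isOpen_compl
  have him : ∀ s ∈ Icc (0:ℝ) 1, γ s ∈ U := by
    intro s hs
    simp only [hU, Set.mem_compl_iff, Set.mem_insert_iff, Set.mem_range, not_or, not_exists]
    exact ⟨fun h => ht ⟨s, hs, h.symm ▸ rfl⟩, fun i h => havoid i ⟨s, hs, h ▸ rfl⟩⟩
  have hmemU : ∀ w ∈ U, w ≠ t ∧ ∀ i, w ≠ z i := by
    intro w hw
    simp only [hU, Set.mem_compl_iff, Set.mem_insert_iff, Set.mem_range, not_or, not_exists] at hw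
    exact ⟨hw.1, fun i h => hw.2 i h.symm⟩
  -- the polynomial quotient
  set q : Polynomial ℂ := g₀ /ₘ (Polynomial.X - Polynomial.C t) with hq
  have hdiv : ∀ w : ℂ, w ≠ t → g₀.eval w * (w - t)⁻¹ = q.eval w + g₀.eval t * (w - t)⁻¹ := by
    intro w hw
    have h0 := Polynomial.modByMonic_add_div g₀ (Polynomial.X - Polynomial.C t)
    have h1 : g₀.eval w = g₀.eval t + (w - t) * q.eval w := by
      conv_lhs => rw [← h0]
      simp [Polynomial.modByMonic_X_sub_C_eq_C_eval, ← hq]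
    have hwt : w - t ≠ 0 := sub_ne_zero.mpr hw
    rw [h1]
    field_simp
    ring
  -- the remainder function with a primitive
  set P : Fin l → ℕ → ℂ → ℂ := fun i j w =>
    ((w - z i)^j * (w - t))⁻¹ - ((t - z i)^j * (w - t))⁻¹ + ((t - z i)^j * (w - z i))⁻¹
    with hP
  set f : ℂ → ℂ := fun w =>
    q.eval w + ∑ i, ∑ j ∈ Finset.Icc 1 (k i), α i j * P i j w with hf
  -- primitive of f on U
  have hprim : ∃ F : ℂ → ℂ, ∀ w ∈ U, HasDerivAt F (f w) w := by
    obtain ⟨Q, hQ⟩ := prim_poly q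
    have hsum : ∃ G : ℂ → ℂ, ∀ w ∈ U,
        HasDerivAt G (∑ i, ∑ j ∈ Finset.Icc 1 (k i), α i j * P i j w) w := by
      apply prim_sum Finset.univ (fun i w => ∑ j ∈ Finset.Icc 1 (k i), α i j * P i j w) U
      intro i _
      apply prim_sum (Finset.Icc 1 (k i)) (fun j w => α i j * P i j w) U
      intro j hj
      have hj1 : 1 ≤ j := (Finset.mem_Icc.mp hj).1
      obtain ⟨F, hF⟩ := primP (z i) t (hti i) (j - 1)
      refine ⟨fun w => α i j * F w, fun w hw => ?_⟩
      obtain ⟨hwt, hwz⟩ := hmemU w hw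
      have hd := (hF w (hwz i) hwt).const_mul (α i j)
      have hj' : j - 1 + 1 = j := Nat.succ_pred_eq_of_pos hj1
      rw [hj'] at hd
      exact hd
    obtain ⟨G, hG⟩ := hsum
    exact ⟨Q + G, fun w hw => by simpa [hf] using (hQ w).add (hG w hw)⟩
  -- continuity of f on U
  have hfc : ContinuousOn f U := by
    apply ContinuousOn.add (q.continuous_aeval.continuousOn)
    apply continuousOn_finset_sum
    intro i _
    apply continuousOn_finset_sum
    intro j _
    apply ContinuousOn.mul continuousOn_const
    have hc1 : ContinuousOn (fun w : ℂ => ((w - z i)^j * (w - t))⁻¹) U := by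
      apply ContinuousOn.inv₀
      · exact (((continuous_id.sub continuous_const).pow j).mul
          (continuous_id.sub continuous_const)).continuousOn
      · intro w hw
        obtain ⟨hwt, hwz⟩ := hmemU w hw
        exact mul_ne_zero (pow_ne_zero _ (sub_ne_zero.mpr (hwz i))) (sub_ne_zero.mpr hwt)
    have hc2 : ContinuousOn (fun w : ℂ => ((t - z i)^j * (w - t))⁻¹) U := by
      apply ContinuousOn.inv₀
      · exact (continuous_const.mul (continuous_id.sub continuous_const)).continuousOn
      · intro w hw
        exact mul_ne_zero (pow_ne_zero _ (sub_ne_zero.mpr (hti i)))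
          (sub_ne_zero.mpr (hmemU w hw).1)
    have hc3 : ContinuousOn (fun w : ℂ => ((t - z i)^j * (w - z i))⁻¹) U := by
      apply ContinuousOn.inv₀
      · exact (continuous_const.mul (continuous_id.sub continuous_const)).continuousOn
      · intro w hw
        exact mul_ne_zero (pow_ne_zero _ (sub_ne_zero.mpr (hti i)))
          (sub_ne_zero.mpr ((hmemU w hw).2 i))
    exact (hc1.sub hc2).add hc3
  -- pointwise identity
  have hpt : ∀ w ∈ U, g w * (w - t)⁻¹ =
      f w + g t * (w - t)⁻¹ - ∑ i, R i t * (w - z i)⁻¹ := by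
    intro w hw
    obtain ⟨hwt, hwz⟩ := hmemU w hw
    have hwt' : w - t ≠ 0 := sub_ne_zero.mpr hwt
    have hRsplit : ∀ i, R i w * (w - t)⁻¹ =
        (∑ j ∈ Finset.Icc 1 (k i), α i j * P i j w)
          + R i t * (w - t)⁻¹ - R i t * (w - z i)⁻¹ := by
      intro i
      have hwzi : w - z i ≠ 0 := sub_ne_zero.mpr (hwz i)
      have htzi : t - z i ≠ 0 := sub_ne_zero.mpr (hti i)
      rw [hR i w, hR i t, Finset.sum_mul, Finset.sum_mul, Finset.sum_mul,
        ← Finset.sum_add_distrib, ← Finset.sum_sub_distrib]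
      apply Finset.sum_congr rfl
      intro j _
      simp only [hP, div_eq_mul_inv, mul_inv]
      ring
    calc g w * (w - t)⁻¹
        = g₀.eval w * (w - t)⁻¹ + ∑ i, R i w * (w - t)⁻¹ := by
          rw [hg w, add_mul, Finset.sum_mul]
      _ = (q.eval w + g₀.eval t * (w - t)⁻¹)
            + ∑ i, ((∑ j ∈ Finset.Icc 1 (k i), α i j * P i j w)
              + R i t * (w - t)⁻¹ - R i t * (w - z i)⁻¹) := by
          rw [hdiv w hwt]
          exact congrArg _ (Finset.sum_congr rfl fun i _ => hRsplit i)
      _ = f w + g t * (w - t)⁻¹ - ∑ i, R i t * (w - z i)⁻¹ := by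
          rw [hf, hg t]
          simp only [Finset.sum_add_distrib, Finset.sum_sub_distrib, ← Finset.sum_mul]
          ring
  -- integrability pieces
  have hu0 : IntervalIntegrable (fun s => f (γ s) * γ' s) volume 0 1 :=
    curve_integrable γ γ' hγ f U him hfc
  have hinv_t : IntervalIntegrable (fun s => (γ s - t)⁻¹ * γ' s) volume 0 1 := by
    apply curve_integrable γ γ' hγ (fun w => (w - t)⁻¹) U him
    apply ContinuousOn.inv₀ ((continuous_id.sub continuous_const).continuousOn)
    exact fun w hw => sub_ne_zero.mpr (hmemU w hw).1
  have hinv_z : ∀ i, IntervalIntegrable (fun s => (γ s - z i)⁻¹ * γ' s) volume 0 1 := by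
    intro i
    apply curve_integrable γ γ' hγ (fun w => (w - z i)⁻¹) U him
    apply ContinuousOn.inv₀ ((continuous_id.sub continuous_const).continuousOn)
    exact fun w hw => sub_ne_zero.mpr ((hmemU w hw).2 i)
  -- rewrite the integrand
  have hcongr : (∫ s in (0:ℝ)..1, g (γ s) * γ' s / (γ s - t)) =
      ∫ s in (0:ℝ)..1, (f (γ s) * γ' s + g t * ((γ s - t)⁻¹ * γ' s)
        - ∑ i, R i t * ((γ s - z i)⁻¹ * γ' s)) := by
    apply intervalIntegral.integral_congr
    intro s hs
    rw [uIcc_of_le zero_le_one] at hs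
    have := hpt (γ s) (him s hs)
    calc g (γ s) * γ' s / (γ s - t) = (g (γ s) * (γ s - t)⁻¹) * γ' s := by
          rw [div_eq_mul_inv]; ring
      _ = _ := by
          rw [this, sub_mul, add_mul, Finset.sum_mul, mul_assoc]
          congr 1
          exact Finset.sum_congr rfl fun i _ => mul_assoc _ _ _
  rw [hcongr]
  have hsum_int : IntervalIntegrable (fun s => ∑ i, R i t * ((γ s - z i)⁻¹ * γ' s)) volume 0 1 := by
    have h := IntervalIntegrable.sum (μ := volume) (a := (0:ℝ)) (b := (1:ℝ)) Finset.univ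
      (f := fun i s => R i t * ((γ s - z i)⁻¹ * γ' s))
      (fun i _ => (hinv_z i).const_mul (R i t))
    have e : (∑ i : Fin l, fun s => R i t * ((γ s - z i)⁻¹ * γ' s))
        = fun s => ∑ i, R i t * ((γ s - z i)⁻¹ * γ' s) := by
      funext s; simp [Finset.sum_apply]
    rwa [e] at h
  rw [intervalIntegral.integral_sub (hu0.add (hinv_t.const_mul (g t))) hsum_int,
    intervalIntegral.integral_add hu0 (hinv_t.const_mul (g t)),
    intervalIntegral.integral_finset_sum
      (fun i (_ : i ∈ (Finset.univ : Finset (Fin l))) => (hinv_z i).const_mul (R i t))]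
  obtain ⟨F, hF⟩ := hprim
  rw [closed_curve_integral_deriv γ γ' hγ hclosed F f U him hF hfc]
  simp only [intervalIntegral.integral_const_mul]
  have e1 : (∫ s in (0:ℝ)..1, (γ s - t)⁻¹ * γ' s) = ∫ s in (0:ℝ)..1, γ' s / (γ s - t) :=
    intervalIntegral.integral_congr fun s _ => by rw [div_eq_mul_inv]; ring
  have e2 : ∀ i, (∫ s in (0:ℝ)..1, (γ s - z i)⁻¹ * γ' s)
      = ∫ s in (0:ℝ)..1, γ' s / (γ s - z i) :=
    fun i => intervalIntegral.integral_congr fun s _ => by rw [div_eq_mul_inv]; ring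
  rw [e1]
  simp only [e2]
  ring

section
open Polynomial

theorem coeffs_zero (l : ℕ) (z : Fin l → ℂ) (hz : Function.Injective z)
    (k : Fin l → ℕ) (hk : ∀ i, 1 ≤ k i) (α : Fin l → ℕ → ℂ)
    (R : Fin l → ℂ → ℂ)
    (hR : ∀ i w, R i w = ∑ j ∈ Finset.Icc 1 (k i), α i j / (w - z i) ^ j)
    (hRne : ∀ i, ∃ j ∈ Finset.Icc 1 (k i), α i j ≠ 0)
    (c : Fin l → ℂ) (ρ : ℝ)
    (hvanish : ∀ t : ℂ, ρ < ‖t‖ → (∀ i, t ≠ z i) → ∑ i, c i * R i t = 0) :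
    ∀ i, c i = 0 := by
  classical
  -- the polynomials
  set B' : Fin l → Polynomial ℂ := fun i => ∑ j ∈ Finset.Icc 1 (k i), C (α i j) * X ^ (k i - j)
    with hB'
  set B : Fin l → Polynomial ℂ := fun i => (B' i).comp (X - C (z i)) with hB
  set Pi : Fin l → Polynomial ℂ :=
    fun i => ∏ i' ∈ Finset.univ.erase i, (X - C (z i')) ^ (k i') with hPi
  set p : Polynomial ℂ := ∑ i, C (c i) * B i * Pi i with hp
  -- evaluation of B
  have hBeval : ∀ i (t : ℂ), t ≠ z i →
      (B i).eval t = R i t * (t - z i) ^ (k i) := by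
    intro i t hti
    have htzi : t - z i ≠ 0 := sub_ne_zero.mpr hti
    rw [hB]
    simp only [eval_comp, eval_sub, eval_X, eval_C, hB', eval_finset_sum, eval_mul, eval_pow,
      eval_C, eval_sub, eval_X, hR i t, Finset.sum_mul]
    apply Finset.sum_congr rfl
    intro j hj
    have hjk : j ≤ k i := (Finset.mem_Icc.mp hj).2
    rw [pow_sub₀ _ htzi hjk, div_eq_mul_inv]
    ring
  -- evaluation of p
  have hpeval : ∀ t : ℂ, (∀ i, t ≠ z i) →
      p.eval t = (∑ i, c i * R i t) * ∏ i', (t - z i') ^ (k i') := by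
    intro t hti
    rw [hp, eval_finset_sum, Finset.sum_mul]
    apply Finset.sum_congr rfl
    intro i _
    rw [eval_mul, eval_mul, eval_C, hBeval i t (hti i),
      ← Finset.mul_prod_erase Finset.univ (fun i' => (t - z i') ^ (k i')) (Finset.mem_univ i)]
    have : (Pi i).eval t = ∏ i' ∈ Finset.univ.erase i, (t - z i') ^ (k i') := by
      rw [hPi]; simp [eval_prod]
    rw [this]
    ring
  -- p vanishes on an infinite set
  have hproots : p = 0 := by
    apply Polynomial.eq_zero_of_infinite_isRoot
    have hinf : ({t : ℂ | ρ < ‖t‖} \ Set.range z).Infinite := by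
      apply Set.Infinite.diff _ (Set.finite_range z)
      apply Set.infinite_of_injective_forall_mem
        (f := fun n : ℕ => (((|ρ| + 1 + n : ℝ)) : ℂ))
      · intro m n hmn
        have h := congrArg Complex.re hmn
        simp only [Complex.ofReal_re] at h
        have : (m:ℝ) = n := by linarith
        exact_mod_cast this
      · intro n
        simp only [Set.mem_setOf_eq, Complex.norm_real, Real.norm_eq_abs]
        have h1 : (0:ℝ) ≤ |ρ| + 1 + n := by positivity
        rw [abs_of_nonneg h1]
        have := abs_nonneg ρ
        have := le_abs_self ρ
        have : (0:ℝ) ≤ n := Nat.cast_nonneg n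
        linarith [le_abs_self ρ, Nat.cast_nonneg (α := ℝ) n]
      
    apply hinf.mono
    intro t ht
    obtain ⟨ht1, ht2⟩ := ht
    have htz : ∀ i, t ≠ z i := fun i h => ht2 ⟨i, h.symm⟩
    simp only [Set.mem_setOf_eq, IsRoot.def]
    rw [hpeval t htz, hvanish t ht1 htz, zero_mul]
  -- extract each coefficient
  intro i
  by_contra hci
  -- divisibility
  have hdvd : (X - C (z i)) ^ (k i) ∣ C (c i) * B i * Pi i := by
    have h1 : ∀ i' ∈ Finset.univ.erase i, (X - C (z i)) ^ (k i) ∣ C (c i') * B i' * Pi i' := by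
      intro i' hi'
      have hne : i ∈ Finset.univ.erase i' :=
        Finset.mem_erase.mpr ⟨(Finset.ne_of_mem_erase hi').symm, Finset.mem_univ i⟩
      have : (X - C (z i)) ^ (k i) ∣ Pi i' := by
        rw [hPi]
        exact Finset.dvd_prod_of_mem _ hne
      exact Dvd.dvd.mul_left this _
    have h2 : C (c i) * B i * Pi i = p - ∑ i' ∈ Finset.univ.erase i, C (c i') * B i' * Pi i' := by
      rw [hp, ← Finset.add_sum_erase Finset.univ _ (Finset.mem_univ i)]
      ring
    rw [h2, hproots]
    exact dvd_sub (dvd_zero _) (Finset.dvd_sum h1)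
  have hcop : IsCoprime ((X - C (z i)) ^ (k i)) (Pi i) := by
    rw [hPi]
    apply IsCoprime.prod_right
    intro i' hi'
    exact ((Polynomial.pairwise_coprime_X_sub_C hz
      ((Finset.ne_of_mem_erase hi').symm)).pow)
  have hdvd2 : (X - C (z i)) ^ (k i) ∣ C (c i) * B i :=
    hcop.dvd_of_dvd_mul_right hdvd
  -- B' i is nonzero
  have hB'ne : B' i ≠ 0 := by
    obtain ⟨j₀, hj₀mem, hj₀⟩ := hRne i
    have hj₀k : j₀ ≤ k i := (Finset.mem_Icc.mp hj₀mem).2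
    intro h0
    apply hj₀
    have hthis := congrArg (fun q => Polynomial.coeff q (k i - j₀)) h0
    simp only [hB', Polynomial.finset_sum_coeff, Polynomial.coeff_C_mul,
      Polynomial.coeff_X_pow, Polynomial.coeff_zero] at hthis
    have hcoeff : (∑ x ∈ Finset.Icc 1 (k i), α i x * if k i - j₀ = k i - x then 1 else 0)
        = α i j₀ := by
      rw [Finset.sum_eq_single j₀]
      · simp
      · intro b hb hbne
        have hbk : b ≤ k i := (Finset.mem_Icc.mp hb).2
        have hb1 : 1 ≤ b := (Finset.mem_Icc.mp hb).1
        have hj1 : 1 ≤ j₀ := (Finset.mem_Icc.mp hj₀mem).1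
        have hne2 : ¬(k i - j₀ = k i - b) := by omega
        simp [hne2]
      · intro h; exact absurd hj₀mem h
    rw [hcoeff] at hthis
    exact hthis
  have hBne : B i ≠ 0 := by
    rw [hB]
    intro h0
    rcases (Polynomial.comp_eq_zero_iff).mp h0 with h | ⟨_, h⟩
    · exact hB'ne h
    · have := congrArg Polynomial.natDegree h
      simp [Polynomial.natDegree_X_sub_C] at this
  have hCBne : C (c i) * B i ≠ 0 := mul_ne_zero (by simpa using hci) hBne
  have hdeg1 : (C (c i) * B i).natDegree ≤ k i - 1 := by
    rw [Polynomial.natDegree_C_mul hci]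
    rw [hB, Polynomial.natDegree_comp, Polynomial.natDegree_X_sub_C, mul_one, hB']
    apply Polynomial.natDegree_sum_le_of_forall_le
    intro j hj
    obtain ⟨hj1, hjk⟩ := Finset.mem_Icc.mp hj
    calc (C (α i j) * X ^ (k i - j)).natDegree ≤ (X ^ (k i - j) : Polynomial ℂ).natDegree := by
          apply Polynomial.natDegree_C_mul_le
      _ ≤ k i - 1 := by rw [Polynomial.natDegree_X_pow]; omega
  have hdeg2 : k i ≤ (C (c i) * B i).natDegree := by
    have := Polynomial.natDegree_le_of_dvd hdvd2 hCBne
    rwa [Polynomial.natDegree_pow, Polynomial.natDegree_X_sub_C, mul_one] at this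
  have := hk i
  omega

end

theorem stmt3 (l : ℕ) (z : Fin l → ℂ) (hz : Function.Injective z)
    (k : Fin l → ℕ) (hk : ∀ i, 1 ≤ k i) (α : Fin l → ℕ → ℂ) (g₀ : Polynomial ℂ)
    (R : Fin l → ℂ → ℂ)
    (hR : ∀ i w, R i w = ∑ j ∈ Finset.Icc 1 (k i), α i j / (w - z i) ^ j)
    (hRne : ∀ i, ∃ j ∈ Finset.Icc 1 (k i), α i j ≠ 0)
    (g : ℂ → ℂ) (hg : ∀ w, g w = g₀.eval w + ∑ i, R i w)
    (γ γ' : ℝ → ℂ) (hγ : PiecewiseC1 γ γ') (hclosed : γ 0 = γ 1)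
    (havoid : ∀ i, z i ∉ γ '' Set.Icc 0 1) :
    ((∀ i, windingNumber γ γ' (z i) = 0) →
      ∀ t : ℂ, t ∉ γ '' Set.Icc 0 1 → (∀ i, t ≠ z i) →
        cauchyTypeIntegral γ γ' g t = windingNumber γ γ' t * g t) ∧
    ((∃ ρ > (0:ℝ), ∀ t : ℂ, ρ < ‖t‖ → cauchyTypeIntegral γ γ' g t = 0) ↔
      ∀ i, windingNumber γ γ' (z i) = 0) := by
  classical
  have hτ : (1 / (2 * Real.pi * Complex.I) : ℂ) ≠ 0 := by
    apply one_div_ne_zero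
    simp [Real.pi_ne_zero, Complex.I_ne_zero, Complex.ext_iff, Real.pi_ne_zero]
  obtain ⟨M, hMbound⟩ := isCompact_Icc.exists_bound_of_continuousOn hγ.1
  have hM : ∀ s ∈ Set.Icc (0:ℝ) 1, ‖γ s‖ ≤ M := by
    intro s hs
    simpa using hMbound s hs
  have hMnonneg : 0 ≤ M := le_trans (norm_nonneg _) (hM 0 (by norm_num))
  -- part (i)
  have part1 : (∀ i, windingNumber γ γ' (z i) = 0) →
      ∀ t : ℂ, t ∉ γ '' Set.Icc 0 1 → (∀ i, t ≠ z i) →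
        cauchyTypeIntegral γ γ' g t = windingNumber γ γ' t * g t := by
    intro hw t ht hti
    have hkey := key_identity l z k α g₀ R hR g hg γ γ' hγ hclosed havoid t ht hti
    have hzero : ∀ i, (∫ s in (0:ℝ)..1, γ' s / (γ s - z i)) = 0 := by
      intro i
      have := hw i
      unfold windingNumber at this
      rcases mul_eq_zero.mp this with h | h
      · exact absurd h hτ
      · exact h
    unfold cauchyTypeIntegral windingNumber
    rw [hkey]
    simp only [hzero, mul_zero, Finset.sum_const_zero, sub_zero]
    ring
  refine ⟨part1, ?_, ?_⟩
  · -- vanishing at infinity implies winding numbers vanish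
    rintro ⟨ρ, hρpos, hvan⟩ i
    have hc := coeffs_zero l z hz k hk α R hR hRne
      (fun i => windingNumber γ γ' (z i)) (max ρ M) ?_ i
    · exact hc
    intro t ht hti
    have htM : M < ‖t‖ := lt_of_le_of_lt (le_max_right ρ M) ht
    have htρ : ρ < ‖t‖ := lt_of_le_of_lt (le_max_left ρ M) ht
    have htim : t ∉ γ '' Set.Icc 0 1 := by
      rintro ⟨s, hs, rfl⟩
      exact absurd htM (not_lt.mpr (hM s hs))
    have hkey := key_identity l z k α g₀ R hR g hg γ γ' hγ hclosed havoid t htim hti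
    have hfar := winding_far γ γ' hγ hclosed M hM t htM
    have hI := hvan t htρ
    unfold cauchyTypeIntegral at hI
    have hint0 : (∫ s in (0:ℝ)..1, g (γ s) * γ' s / (γ s - t)) = 0 := by
      rcases mul_eq_zero.mp hI with h | h
      · exact absurd h hτ
      · exact h
    rw [hint0, hfar, mul_zero, zero_sub] at hkey
    have hkey2 : (∑ i', R i' t * ∫ s in (0:ℝ)..1, γ' s / (γ s - z i')) = 0 :=
      neg_eq_zero.mp hkey.symm
    calc (∑ i', windingNumber γ γ' (z i') * R i' t)
        = (1 / (2 * Real.pi * Complex.I)) *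
          ∑ i', R i' t * (∫ s in (0:ℝ)..1, γ' s / (γ s - z i')) := by
          rw [Finset.mul_sum]
          apply Finset.sum_congr rfl
          intro i' _
          unfold windingNumber
          ring
      _ = 0 := by rw [hkey2, mul_zero]
  · -- winding numbers vanish implies vanishing at infinity
    intro hw
    refine ⟨max M 1 + ∑ i, ‖z i‖, ?_, ?_⟩
    · have h1 : (0:ℝ) ≤ ∑ i, ‖z i‖ :=
        Finset.sum_nonneg fun i _ => norm_nonneg _
      have h2 : (1:ℝ) ≤ max M 1 := le_max_right M 1
      linarith
    · intro t ht
      have hsum : ∀ i, ‖z i‖ ≤ ∑ i', ‖(z i')‖ :=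
        fun i => Finset.single_le_sum (fun i' _ => norm_nonneg (z i'))
          (Finset.mem_univ i)
      have htM : M < ‖t‖ := by
        have h1 : (0:ℝ) ≤ ∑ i, ‖z i‖ :=
          Finset.sum_nonneg fun i _ => norm_nonneg _
        have := le_max_left M 1
        linarith
      have hti : ∀ i, t ≠ z i := by
        intro i h
        have h2 : ‖t‖ ≤ ∑ i', ‖(z i')‖ := h ▸ hsum i
        have := le_max_right M 1
        linarith
      have htim : t ∉ γ '' Set.Icc 0 1 := by
        rintro ⟨s, hs, rfl⟩
        exact absurd htM (not_lt.mpr (hM s hs))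
      rw [part1 hw t htim hti]
      have hfar := winding_far γ γ' hγ hclosed M hM t htM
      unfold windingNumber
      rw [hfar, mul_zero, zero_mul]
end

section
/- Let U ⊆ ℂ be an open, simply connected set, let γ : [0,1] → ℂ be a closed piecewise continuously differentiable curve whose image is contained in U, and let z₁,…,z_l ∈ U be distinct points not on the image of γ. Let g be holomorphic on U \ {z₁,…,z_l}, and suppose g is meromorphic on U with essential part R_i(z) = Σ_{j=1}^{k_i} α_{i,j}/(z − z_i)^j at z_i, i.e. for each i the function z ↦ g(z) − R_i(z) extends holomorphically to a neighborhood of z_i. Then for every t ∈ U lying neither on the image of γ nor in {z₁,…,z_l}: I(γ,g,t) = μ(γ,t) g(t) − Σ_{i=1}^l μ(γ,z_i) R_i(t). -/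
open MeasureTheory Set

open Metric intervalIntegral

/-- Two primitives of the same function on two convex open sets differ by a constant
on the intersection. -/
lemma aux_primdiff {f F G : ℂ → ℂ} {B B' : Set ℂ} (hB : IsOpen B) (hB' : IsOpen B')
    (hBc : Convex ℝ B) (hB'c : Convex ℝ B')
    (hF : ∀ z ∈ B, HasDerivAt F (f z) z) (hG : ∀ z ∈ B', HasDerivAt G (f z) z)
    {x y : ℂ} (hx : x ∈ B ∩ B') (hy : y ∈ B ∩ B') :
    F x - G x = F y - G y := by
  have hco : Convex ℝ (B ∩ B') := hBc.inter hB'c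
  have hop : IsOpen (B ∩ B') := hB.inter hB'
  have hd : ∀ z ∈ B ∩ B', HasDerivAt (fun w => F w - G w) 0 z := by
    intro z hz
    have h := (hF z hz.1).sub (hG z hz.2)
    rw [sub_self] at h
    exact h
  refine hco.is_const_of_fderivWithin_eq_zero (fun z hz => ((hd z hz).differentiableAt).differentiableWithinAt) (fun z hz => ?_) hx hy
  rw [fderivWithin_eq_fderiv (hop.uniqueDiffWithinAt hz) ((hd z hz).differentiableAt)]
  have := (hd z hz).hasFDerivAt.fderiv
  rw [this]
  ext w
  simp

/-- Local primitive of a holomorphic function on a small ball. -/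
lemma aux_exists_primitive {f : ℂ → ℂ} {U : Set ℂ} (hf : DifferentiableOn ℂ f U)
    {c : ℂ} {e : ℝ} (he : 0 < e) (hsub : closedBall c (2 * e) ⊆ U) :
    ∃ F : ℂ → ℂ, ∀ z ∈ ball c e, HasDerivAt F (f z) z := by
  set R : NNReal := ⟨2 * e, by positivity⟩ with hRdef
  have hRpos : 0 < R := by
    rw [← NNReal.coe_lt_coe]
    show (0:ℝ) < 2 * e
    positivity
  have hd : DifferentiableOn ℂ f (closedBall c R) := hf.mono (by exact_mod_cast hsub)
  have hp := hd.hasFPowerSeriesOnBall hRpos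
  set p := cauchyPowerSeries f c R with hpdef
  set a : ℕ → ℂ := fun n => p.coeff n with hadef
  have hrad : (e.toNNReal : ENNReal) < p.radius := by
    refine lt_of_lt_of_le ?_ hp.r_le
    rw [ENNReal.coe_lt_coe, ← NNReal.coe_lt_coe]
    simp [Real.coe_toNNReal e he.le, hRdef]
    show e < 2 * e
    linarith
  have hu : Summable (fun n => ‖p n‖ * e ^ n) := by
    have := p.summable_norm_mul_pow hrad
    simpa [Real.coe_toNNReal e he.le] using this
  set g : ℕ → ℂ → ℂ := fun n z => (((n : ℂ) + 1)⁻¹ * a n) * (z - c) ^ (n + 1) with hgdef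
  set g' : ℕ → ℂ → ℂ := fun n z => a n * (z - c) ^ n with hg'def
  have hder : ∀ n z, HasDerivAt (g n) (g' n z) z := by
    intro n z
    have h1 : HasDerivAt (fun w : ℂ => (w - c) ^ (n + 1))
        (((n : ℂ) + 1) * (z - c) ^ n) z := by
      have := ((hasDerivAt_pow (n + 1) (z - c)).comp z ((hasDerivAt_id z).sub_const c))
      simpa [mul_comm, Nat.cast_add, Function.comp_def] using this
    have := h1.const_mul (((n : ℂ) + 1)⁻¹ * a n)
    refine this.congr_deriv ?_
    have hne : ((n : ℂ) + 1) ≠ 0 := Nat.cast_add_one_ne_zero n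
    simp only [hg'def]
    rw [show ((n:ℂ)+1)⁻¹ * a n * (((n:ℂ)+1) * (z-c)^n) = ((n:ℂ)+1)⁻¹ * ((n:ℂ)+1) * (a n * (z-c)^n) by ring, inv_mul_cancel₀ hne, one_mul]
  have hbound : ∀ n z, z ∈ ball c e → ‖g' n z‖ ≤ ‖p n‖ * e ^ n := by
    intro n z hz
    have h1 : ‖a n‖ ≤ ‖p n‖ := by
      have h := (p n).le_opNorm (1 : Fin n → ℂ)
      simp only [Pi.one_apply, norm_one, Finset.prod_const, one_pow, mul_one] at h
      exact h
    have h2 : ‖z - c‖ ≤ e := by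
      have := mem_ball_iff_norm.mp hz
      linarith
    calc ‖g' n z‖ = ‖a n‖ * ‖z - c‖ ^ n := by simp [hg'def, norm_pow]
    _ ≤ ‖p n‖ * e ^ n := by
        exact mul_le_mul h1 (pow_le_pow_left₀ (norm_nonneg _) h2 n) (by positivity) (norm_nonneg _)
  have hg0 : Summable (fun n => g n c) := by
    apply summable_of_ne_finset_zero (s := ∅)
    intro n _
    simp [hgdef]
  refine ⟨fun z => ∑' n, g n z, fun z hz => ?_⟩
  have hkey := hasDerivAt_tsum_of_isPreconnected hu isOpen_ball
    (convex_ball c e).isPreconnected (fun n y hy => hder n y) hbound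
    (mem_ball_self he) hg0 hz
  refine hkey.congr_deriv (Eq.symm ?_)
  -- f z = ∑' n, a n * (z - c)^n
  have hzR : z ∈ EMetric.ball c (R : ENNReal) := by
    show z ∈ Metric.eball c (R : ENNReal)
    rw [Metric.eball_coe]
    refine mem_ball.mpr (lt_of_lt_of_le (mem_ball.mp hz) ?_)
    show e ≤ 2 * e
    linarith
  have hsum := hp.hasSum_sub hzR
  have : (fun n => p n fun _ => z - c) = fun n => g' n z := by
    funext n
    rw [FormalMultilinearSeries.apply_eq_pow_smul_coeff]
    simp [hg'def, hadef, smul_eq_mul, mul_comm]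
  rw [this] at hsum
  exact hsum.tsum_eq.symm

/-- FTC-2 allowing a finite exceptional set. -/
lemma aux_ftc_finset (S : Finset ℝ) : ∀ (a b : ℝ), a ≤ b → ∀ (p q : ℝ → ℂ),
    ContinuousOn p (Icc a b) →
    (∀ x ∈ Ioo a b \ (S : Set ℝ), HasDerivWithinAt p (q x) (Ioi x) x) →
    IntervalIntegrable q volume a b →
    ∫ y in a..b, q y = p b - p a := by
  induction S using Finset.strongInduction with
  | _ S ih =>
    intro a b hab p q hcont hderiv hint
    by_cases hS : ∃ x ∈ S, x ∈ Ioo a b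
    · obtain ⟨x, hxS, hx⟩ := hS
      have hax : a ≤ x := hx.1.le
      have hxb : x ≤ b := hx.2.le
      have h1 : ∫ y in a..x, q y = p x - p a := by
        refine ih (S.erase x) (S.erase_ssubset hxS) a x hax p q
          (hcont.mono (Icc_subset_Icc le_rfl hxb)) (fun y hy => ?_)
          (hint.mono_set (by rw [uIcc_of_le hax, uIcc_of_le hab]; exact Icc_subset_Icc le_rfl hxb))
        refine hderiv y ⟨⟨hy.1.1, hy.1.2.trans hx.2⟩, fun hyS => hy.2 ?_⟩
        exact Finset.mem_coe.mpr (Finset.mem_erase.mpr ⟨ne_of_lt hy.1.2, hyS⟩)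
      have h2 : ∫ y in x..b, q y = p b - p x := by
        refine ih (S.erase x) (S.erase_ssubset hxS) x b hxb p q
          (hcont.mono (Icc_subset_Icc hax le_rfl)) (fun y hy => ?_)
          (hint.mono_set (by rw [uIcc_of_le hxb, uIcc_of_le hab]; exact Icc_subset_Icc hax le_rfl))
        refine hderiv y ⟨⟨hx.1.trans hy.1.1, hy.1.2⟩, fun hyS => hy.2 ?_⟩
        exact Finset.mem_coe.mpr (Finset.mem_erase.mpr ⟨(ne_of_lt hy.1.1).symm, hyS⟩)
      rw [← intervalIntegral.integral_add_adjacent_intervals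
        (hint.mono_set (by rw [uIcc_of_le hax, uIcc_of_le hab]; exact Icc_subset_Icc le_rfl hxb))
        (hint.mono_set (by rw [uIcc_of_le hxb, uIcc_of_le hab]; exact Icc_subset_Icc hax le_rfl)),
        h1, h2]
      ring
    · refine intervalIntegral.integral_eq_sub_of_hasDeriv_right_of_le hab hcont
        (fun x hx => hderiv x ⟨hx, fun hxS => hS ⟨x, Finset.mem_coe.mp hxS, hx⟩⟩) hint

/-- FTC along a piecewise-C¹ curve segment mapping into a set with a primitive. -/
lemma aux_ftc_curve {γ γ' : ℝ → ℂ} {S : Finset ℝ}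
    (hcont : ContinuousOn γ (Icc 0 1))
    (hderiv : ∀ s ∈ Icc (0:ℝ) 1 \ (S : Set ℝ), HasDerivWithinAt γ (γ' s) (Icc 0 1) s)
    {a b : ℝ} (ha : 0 ≤ a) (hab : a ≤ b) (hb : b ≤ 1)
    {f F : ℂ → ℂ} {V : Set ℂ} (hV : IsOpen V)
    (hF : ∀ z ∈ V, HasDerivAt F (f z) z)
    (him : γ '' Icc a b ⊆ V)
    (hint : IntervalIntegrable (fun s => f (γ s) * γ' s) volume a b) :
    ∫ s in a..b, f (γ s) * γ' s = F (γ b) - F (γ a) := by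
  have hFc : ContinuousOn F V := fun z hz => ((hF z hz).continuousAt).continuousWithinAt
  refine aux_ftc_finset S a b hab (fun s => F (γ s)) _ ?_ ?_ hint
  · exact hFc.comp (hcont.mono (Icc_subset_Icc ha hb)) (fun s hs => him ⟨s, hs, rfl⟩)
  · intro x hx
    have hx01 : x ∈ Ioo (0:ℝ) 1 := ⟨lt_of_le_of_lt ha hx.1.1, lt_of_lt_of_le hx.1.2 hb⟩
    have hγx : HasDerivAt γ (γ' x) x :=
      (hderiv x ⟨⟨hx01.1.le, hx01.2.le⟩, hx.2⟩).hasDerivAt (Icc_mem_nhds hx01.1 hx01.2)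
    have hγxV : γ x ∈ V := him ⟨x, ⟨hx.1.1.le, hx.1.2.le⟩, rfl⟩
    exact ((hF (γ x) hγxV).comp x hγx).hasDerivWithinAt

lemma aux_two_pole {w t z : ℂ} (hwt : w ≠ t) (hwz : w ≠ z) (htz : t ≠ z) (j : ℕ) :
    (w - t)⁻¹ * ((w - z) ^ (j+1))⁻¹
    = ((t - z) ^ (j+1))⁻¹ * (w - t)⁻¹ - ((t - z) ^ (j+1))⁻¹ * (w - z)⁻¹
      - ∑ m ∈ Finset.range j, ((t - z) ^ (j - m))⁻¹ * ((w - z) ^ (m + 2))⁻¹ := by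
  have hwz' : w - z ≠ 0 := sub_ne_zero.2 hwz
  have hwt' : w - t ≠ 0 := sub_ne_zero.2 hwt
  have htz' : t - z ≠ 0 := sub_ne_zero.2 htz
  have hbase : (w - t)⁻¹ * (w - z)⁻¹ = (t - z)⁻¹ * (w - t)⁻¹ - (t - z)⁻¹ * (w - z)⁻¹ := by
    field_simp
    ring
  induction j with
  | zero =>
    simpa using hbase
  | succ j ih =>
    have ih' : ∑ m ∈ Finset.range j, ((t - z) ^ (j - m))⁻¹ * ((w - z) ^ (m + 2))⁻¹
        = ((t - z) ^ (j+1))⁻¹ * (w - t)⁻¹ - ((t - z) ^ (j+1))⁻¹ * (w - z)⁻¹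
          - (w - t)⁻¹ * ((w - z) ^ (j+1))⁻¹ := by linear_combination ih
    rw [Finset.sum_range_succ']
    simp only [Nat.succ_sub_succ]
    have hsum : ∑ m ∈ Finset.range j, ((t - z) ^ (j - m))⁻¹ * ((w - z) ^ (m + 1 + 2))⁻¹
        = (w - z)⁻¹ * ∑ m ∈ Finset.range j, ((t - z) ^ (j - m))⁻¹ * ((w - z) ^ (m + 2))⁻¹ := by
      rw [Finset.mul_sum]
      refine Finset.sum_congr rfl fun m _ => ?_
      rw [show m + 1 + 2 = (m + 2) + 1 by ring, pow_succ, mul_inv]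
      ring
    rw [hsum, ih']
    have hp1 : (w - z) ^ (j + 1 + 1) = (w - z) ^ (j + 1) * (w - z) := pow_succ _ _
    have hp2 : (t - z) ^ (j + 1 + 1) = (t - z) ^ (j + 1) * (t - z) := pow_succ _ _
    have hj1 : j + 1 - 0 = j + 1 := rfl
    rw [hj1, hp1, hp2, mul_inv, mul_inv,
      show (w - z) ^ (0 + 2) = (w - z) * (w - z) from by ring, mul_inv]
    linear_combination ((t - z) ^ (j+1))⁻¹ * hbase

lemma aux_pf {t z w : ℂ} (hwt : w ≠ t) (hwz : w ≠ z) (htz : t ≠ z) (k : ℕ) (α : ℕ → ℂ) :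
    (w - t)⁻¹ * (∑ j ∈ Finset.Icc 1 k, α j / (w - z) ^ j)
    = (∑ j ∈ Finset.Icc 1 k, α j / (t - z) ^ j) * (w - t)⁻¹
      - (∑ j ∈ Finset.Icc 1 k, α j / (t - z) ^ j) * (w - z)⁻¹
      - ∑ j ∈ Finset.Icc 1 k, α j *
          ∑ m ∈ Finset.range (j-1), ((t - z) ^ (j-1-m))⁻¹ * ((w - z) ^ (m + 2))⁻¹ := by
  rw [Finset.mul_sum, Finset.sum_mul, Finset.sum_mul, ← Finset.sum_sub_distrib,
    ← Finset.sum_sub_distrib]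
  refine Finset.sum_congr rfl fun j hj => ?_
  have hj1 : 1 ≤ j := (Finset.mem_Icc.mp hj).1
  obtain ⟨j', rfl⟩ : ∃ j', j = j' + 1 := ⟨j - 1, by omega⟩
  have h := aux_two_pole hwt hwz htz j'
  simp only [Nat.add_sub_cancel]
  rw [div_eq_mul_inv, div_eq_mul_inv]
  linear_combination α (j' + 1) * h

lemma aux_pole_prim {z w : ℂ} (hwz : w ≠ z) (m : ℕ) :
    HasDerivAt (fun u => (-(m+1) : ℂ)⁻¹ * ((u - z)^(m+1))⁻¹) (((w - z)^(m+2))⁻¹) w := by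
  have h0 : w - z ≠ 0 := sub_ne_zero.2 hwz
  have h := (hasDerivAt_zpow (-(m+1) : ℤ) (w - z) (Or.inl h0)).comp w
    ((hasDerivAt_id w).sub_const z)
  have h2 := h.const_mul ((-(m+1) : ℂ))⁻¹
  have hfun : (fun u => (-(m+1) : ℂ)⁻¹ * ((u - z)^(m+1))⁻¹)
      = fun u => (-(m+1) : ℂ)⁻¹ * ((fun x : ℂ => x ^ (-(m+1) : ℤ)) ∘ fun u => u - z) u := by
    funext u
    simp only [Function.comp]
    rw [show (-(m+1) : ℤ) = -((m+1 : ℕ) : ℤ) by push_cast; ring, zpow_neg, zpow_natCast]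
  have hval : (-(m+1) : ℂ)⁻¹ * (((-(m+1) : ℤ) : ℂ) * (w - z) ^ ((-(m+1) : ℤ) - 1) * 1)
      = ((w - z)^(m+2))⁻¹ := by
    have hne : ((-(m+1) : ℤ) : ℂ) ≠ 0 := by
      push_cast
      intro hcon
      have : ((m : ℂ) + 1) ≠ 0 := Nat.cast_add_one_ne_zero m
      apply this
      linear_combination -hcon
    have hexp : ((-(m+1) : ℤ) - 1) = -((m+2 : ℕ) : ℤ) := by push_cast; ring
    rw [hexp, zpow_neg, zpow_natCast]
    rw [show ((-(m+1) : ℤ) : ℂ) = -((m:ℂ)+1) by push_cast; ring]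
    have hne2 : (-((m:ℂ)+1)) ≠ 0 := by
      intro hcon
      exact (Nat.cast_add_one_ne_zero m : ((m : ℂ) + 1) ≠ 0) (by linear_combination -hcon)
    calc (-((m:ℂ)+1))⁻¹ * (-((m:ℂ)+1) * ((w - z)^(m+2))⁻¹ * 1)
        = ((-((m:ℂ)+1))⁻¹ * (-((m:ℂ)+1))) * ((w - z)^(m+2))⁻¹ := by ring
      _ = ((w - z)^(m+2))⁻¹ := by rw [inv_mul_cancel₀ hne2, one_mul]
  rw [hfun]
  rw [← hval]
  exact h2

set_option maxHeartbeats 1600000 in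
/-- Cauchy's integral theorem for a closed piecewise-C¹ curve in an open simply
connected set. -/
lemma aux_cauchy_sc {U : Set ℂ} (hUopen : IsOpen U) (hUsc : SimplyConnectedSpace U)
    {γ γ' : ℝ → ℂ} (hγ : PiecewiseC1 γ γ') (hclosed : γ 0 = γ 1)
    (himage : γ '' Set.Icc 0 1 ⊆ U) {f : ℂ → ℂ} (hf : DifferentiableOn ℂ f U)
    (hint : IntervalIntegrable (fun s => f (γ s) * γ' s) volume 0 1) :
    ∫ s in (0:ℝ)..1, f (γ s) * γ' s = 0 := by
  obtain ⟨hγc, hγ'int, S, hγd, -⟩ := hγ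
  -- the base point
  have h0mem : γ 0 ∈ U := himage ⟨0, left_mem_Icc.mpr zero_le_one, rfl⟩
  set x₀ : U := ⟨γ 0, h0mem⟩ with hx₀def
  have hmem : ∀ s : unitInterval, γ ↑s ∈ U := fun s => himage ⟨↑s, s.2, rfl⟩
  -- the loop as a `Path`
  set P : Path x₀ x₀ :=
    { toFun := fun s => ⟨γ ↑s, hmem s⟩
      continuous_toFun := Continuous.subtype_mk hγc.restrict _
      source' := rfl
      target' := Subtype.ext hclosed.symm } with hPdef
  obtain ⟨H⟩ : Path.Homotopic P (Path.refl x₀) :=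
    SimplyConnectedSpace.paths_homotopic P (Path.refl x₀)
  -- the homotopy as a globally defined map `ℝ × ℝ → ℂ` ; `K (s, t)`
  set pj : ℝ → unitInterval := fun r => Set.projIcc 0 1 zero_le_one r with hpjdef
  set K : ℝ × ℝ → ℂ := fun q => ↑(H (pj q.2, pj q.1)) with hKdef
  have hpj_mem : ∀ r ∈ Icc (0:ℝ) 1, (pj r : ℝ) = r := by
    intro r hr; rw [hpjdef]; simp [Set.projIcc_of_mem zero_le_one hr]
  have hKs0 : ∀ s ∈ Icc (0:ℝ) 1, K (s, 0) = γ s := by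
    intro s hs
    show (↑(H (pj 0, pj s)) : ℂ) = γ s
    have : pj 0 = 0 := by rw [hpjdef]; simp [Set.projIcc_left]
    rw [this]
    have h2 : H (0, pj s) = P (pj s) := H.apply_zero (pj s)
    rw [h2]
    show γ ↑(pj s) = γ s
    rw [hpj_mem s hs]
  have hKs1 : ∀ s : ℝ, K (s, 1) = γ 0 := by
    intro s
    show (↑(H (pj 1, pj s)) : ℂ) = γ 0
    have : pj 1 = 1 := by rw [hpjdef]; simp [Set.projIcc_right]
    rw [this]
    have h2 : H (1, pj s) = (Path.refl x₀) (pj s) := H.apply_one (pj s)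
    rw [h2]
    rfl
  have hK0t : ∀ τ : ℝ, K (0, τ) = γ 0 := by
    intro τ
    show (↑(H (pj τ, pj 0)) : ℂ) = γ 0
    have : pj 0 = 0 := by rw [hpjdef]; simp [Set.projIcc_left]
    rw [this, H.source (pj τ)]
  have hK1t : ∀ τ : ℝ, K (1, τ) = γ 0 := by
    intro τ
    show (↑(H (pj τ, pj 1)) : ℂ) = γ 0
    have : pj 1 = 1 := by rw [hpjdef]; simp [Set.projIcc_right]
    rw [this, H.target (pj τ)]
  -- compact image
  set Kimg : Set ℂ := (fun q : unitInterval × unitInterval => (↑(H q) : ℂ)) '' Set.univ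
    with hKimgdef
  have hKimg_cpt : IsCompact Kimg :=
    isCompact_univ.image (continuous_subtype_val.comp H.continuous)
  have hKimg_sub : Kimg ⊆ U := by
    rintro x ⟨q, -, rfl⟩; exact (H q).2
  have hKmem : ∀ q : ℝ × ℝ, K q ∈ Kimg := fun q => ⟨(pj q.2, pj q.1), trivial, rfl⟩
  -- radius for local primitives
  obtain ⟨δ₀, hδ₀, hthick⟩ := hKimg_cpt.exists_thickening_subset_open hUopen hKimg_sub
  set e : ℝ := δ₀ / 3 with hedef
  have he : 0 < e := by positivity
  have hprim : ∀ q : ℝ × ℝ, ∃ F : ℂ → ℂ, ∀ z ∈ ball (K q) e, HasDerivAt F (f z) z := by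
    intro q
    refine aux_exists_primitive hf he fun y hy => hthick ?_
    rw [Metric.mem_thickening_iff]
    exact ⟨K q, hKmem q, lt_of_le_of_lt (mem_closedBall.mp hy) (by rw [hedef]; linarith)⟩
  choose Fc hFc using hprim
  -- uniform continuity of K
  have hucK : UniformContinuous K := by
    have h1 : UniformContinuous (fun u : unitInterval × unitInterval => (↑(H (u.2, u.1)) : ℂ)) :=
      CompactSpace.uniformContinuous_of_continuous
        (continuous_subtype_val.comp (H.continuous.comp (by continuity)))
    have h2 : UniformContinuous (fun q : ℝ × ℝ => ((pj q.1, pj q.2) : unitInterval × unitInterval)) :=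
      UniformContinuous.prodMk
        (((LipschitzWith.projIcc _).uniformContinuous).comp uniformContinuous_fst)
        (((LipschitzWith.projIcc _).uniformContinuous).comp uniformContinuous_snd)
    exact h1.comp h2
  obtain ⟨δ, hδ, hmod⟩ := Metric.uniformContinuous_iff.mp hucK e he
  -- the grid
  obtain ⟨n, hn⟩ := exists_nat_one_div_lt (show (0:ℝ) < δ from hδ)
  set N : ℕ := n + 1 with hNdef
  have hN0 : (0:ℝ) < N := by positivity
  have hNd : (1:ℝ) / N < δ := by exact_mod_cast hn
  set σ : ℕ → ℝ := fun i => (i : ℝ) / N with hσdef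
  have hσ0 : σ 0 = 0 := by simp [hσdef]
  have hσN : σ N = 1 := by rw [hσdef]; field_simp
  have hσmono : ∀ i : ℕ, σ i ≤ σ (i + 1) := by
    intro i
    show (i:ℝ)/N ≤ ((i+1:ℕ):ℝ)/N
    gcongr
    exact_mod_cast Nat.le_succ i
  have hσnonneg : ∀ i : ℕ, 0 ≤ σ i := by
    intro i; show (0:ℝ) ≤ (i:ℝ)/N; positivity
  have hσle1 : ∀ i : ℕ, i ≤ N → σ i ≤ 1 := by
    intro i hi
    show (i:ℝ)/N ≤ 1
    rw [div_le_one hN0]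
    exact_mod_cast hi
  have hgap : ∀ i : ℕ, σ (i+1) - σ i = 1/N := by
    intro i
    show ((i+1:ℕ):ℝ)/N - (i:ℝ)/N = 1/N
    push_cast; ring
  have hstep : ∀ i : ℕ, dist (σ (i+1)) (σ i) < δ := by
    intro i
    rw [Real.dist_eq, hgap i, abs_of_nonneg (by positivity)]
    exact hNd
  have hselfd : ∀ r : ℝ, dist r r < δ := fun r => by rw [dist_self]; exact hδ
  have hmem2 : ∀ s s' τ τ' : ℝ, dist s s' < δ → dist τ τ' < δ →
      K (s, τ) ∈ ball (K (s', τ')) e := by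
    intro s s' τ τ' h1 h2
    apply mem_ball.mpr
    apply hmod
    rw [Prod.dist_eq]
    exact max_lt h1 h2
  set W : ℕ → ℂ := fun j => ∑ i ∈ Finset.range N,
    (Fc (σ i, σ j) (K (σ (i+1), σ j)) - Fc (σ i, σ j) (K (σ i, σ j))) with hWdef
  have hWstep : ∀ j : ℕ, W j = W (j+1) := by
    intro j
    have hdt : dist (σ (j+1)) (σ j) < δ := hstep j
    have hdt' : dist (σ j) (σ (j+1)) < δ := by rwa [dist_comm]
    have key1 : ∀ i : ℕ,
        Fc (σ i, σ j) (K (σ (i+1), σ j)) - Fc (σ i, σ j) (K (σ i, σ j))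
        = Fc (σ i, σ (j+1)) (K (σ (i+1), σ j)) - Fc (σ i, σ (j+1)) (K (σ i, σ j)) := by
      intro i
      have key := aux_primdiff isOpen_ball isOpen_ball (convex_ball _ _) (convex_ball _ _)
        (hFc (σ i, σ j)) (hFc (σ i, σ (j+1)))
        (x := K (σ (i+1), σ j)) (y := K (σ i, σ j))
        ⟨hmem2 _ _ _ _ (hstep i) (hselfd _), hmem2 _ _ _ _ (hstep i) hdt'⟩
        ⟨mem_ball_self he, hmem2 _ _ _ _ (hselfd _) hdt'⟩
      linear_combination key
    have key2 : ∀ i : ℕ,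
        Fc (σ i, σ (j+1)) (K (σ (i+1), σ j)) - Fc (σ i, σ (j+1)) (K (σ (i+1), σ (j+1)))
        = Fc (σ (i+1), σ (j+1)) (K (σ (i+1), σ j))
          - Fc (σ (i+1), σ (j+1)) (K (σ (i+1), σ (j+1))) := by
      intro i
      have key := aux_primdiff isOpen_ball isOpen_ball (convex_ball _ _) (convex_ball _ _)
        (hFc (σ i, σ (j+1))) (hFc (σ (i+1), σ (j+1)))
        (x := K (σ (i+1), σ j)) (y := K (σ (i+1), σ (j+1)))
        ⟨hmem2 _ _ _ _ (hstep i) hdt', hmem2 _ _ _ _ (hselfd _) hdt'⟩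
        ⟨hmem2 _ _ _ _ (hstep i) (hselfd _), mem_ball_self he⟩
      linear_combination key
    set φ : ℕ → ℂ := fun i =>
      Fc (σ i, σ (j+1)) (K (σ i, σ j)) - Fc (σ i, σ (j+1)) (K (σ i, σ (j+1))) with hφdef
    have hφ0 : φ 0 = 0 := by
      have h1 : K (σ 0, σ j) = γ 0 := by rw [hσ0]; exact hK0t _
      have h2 : K (σ 0, σ (j+1)) = γ 0 := by rw [hσ0]; exact hK0t _
      simp only [hφdef, h1, h2, sub_self]
    have hφN : φ N = 0 := by
      have h1 : K (σ N, σ j) = γ 0 := by rw [hσN]; exact hK1t _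
      have h2 : K (σ N, σ (j+1)) = γ 0 := by rw [hσN]; exact hK1t _
      simp only [hφdef, h1, h2, sub_self]
    have hdiff : W j - W (j+1) = ∑ i ∈ Finset.range N, (φ (i+1) - φ i) := by
      simp only [hWdef]
      rw [← Finset.sum_sub_distrib]
      apply Finset.sum_congr rfl
      intro i _
      rw [key1 i]
      have h2 := key2 i
      simp only [hφdef]
      linear_combination h2
    rw [Finset.sum_range_sub φ N, hφN, hφ0, sub_zero] at hdiff
    linear_combination hdiff
  have hW0N : ∀ j : ℕ, W 0 = W j := by
    intro j
    induction j with
    | zero => rfl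
    | succ m ih => rw [ih]; exact hWstep m
  have hWN : W N = 0 := by
    simp only [hWdef]
    apply Finset.sum_eq_zero
    intro i _
    rw [hσN, hKs1, hKs1, sub_self]
  have hintk : ∀ k, k < N → IntervalIntegrable (fun s => f (γ s) * γ' s) volume (σ k) (σ (k+1)) := by
    intro k hk
    apply hint.mono_set
    rw [uIcc_of_le (hσmono k), uIcc_of_le zero_le_one]
    exact Icc_subset_Icc (hσnonneg k) (hσle1 (k+1) hk)
  have hW0 : W 0 = ∫ s in (0:ℝ)..1, f (γ s) * γ' s := by
    have hsplit := intervalIntegral.sum_integral_adjacent_intervals hintk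
    rw [hσ0, hσN] at hsplit
    rw [← hsplit]
    simp only [hWdef]
    apply Finset.sum_congr rfl
    intro i hi
    have hiN : i < N := Finset.mem_range.mp hi
    have hle1' : σ (i+1) ≤ 1 := hσle1 (i+1) hiN
    have himg : γ '' Icc (σ i) (σ (i+1)) ⊆ ball (K (σ i, σ 0)) e := by
      rintro x ⟨s, hs, rfl⟩
      have hs01 : s ∈ Icc (0:ℝ) 1 := ⟨(hσnonneg i).trans hs.1, hs.2.trans hle1'⟩
      rw [← hKs0 s hs01]
      apply hmem2
      · rw [Real.dist_eq, abs_of_nonneg (by linarith [hs.1])]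
        have := hgap i
        have h2 := hs.2
        linarith
      · rw [hσ0]; exact hselfd 0
    have hftc := aux_ftc_curve hγc hγd (hσnonneg i) (hσmono i) hle1'
      isOpen_ball (hFc (σ i, σ 0)) himg (hintk i hiN)
    rw [hσ0] at hftc ⊢
    rw [hKs0 (σ (i+1)) ⟨hσnonneg _, hle1'⟩, hKs0 (σ i) ⟨hσnonneg _, hσle1 i (Nat.le_of_lt hiN)⟩]
    exact hftc.symm
  calc ∫ s in (0:ℝ)..1, f (γ s) * γ' s = W 0 := hW0.symm
  _ = W N := hW0N N
  _ = 0 := hWN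

set_option maxHeartbeats 1600000 in
theorem stmt5 (U : Set ℂ) (hUopen : IsOpen U) (hUsc : SimplyConnectedSpace U)
    (γ γ' : ℝ → ℂ) (hγ : PiecewiseC1 γ γ') (hclosed : γ 0 = γ 1)
    (himage : γ '' Set.Icc 0 1 ⊆ U)
    (l : ℕ) (z : Fin l → ℂ) (hz : Function.Injective z)
    (hzU : ∀ i, z i ∈ U) (havoid : ∀ i, z i ∉ γ '' Set.Icc 0 1)
    (k : Fin l → ℕ) (hk : ∀ i, 1 ≤ k i) (α : Fin l → ℕ → ℂ)
    (R : Fin l → ℂ → ℂ)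
    (hR : ∀ i w, R i w = ∑ j ∈ Finset.Icc 1 (k i), α i j / (w - z i) ^ j)
    (g : ℂ → ℂ) (hg : DifferentiableOn ℂ g (U \ Set.range z))
    (hmero : ∀ i, ∃ V ∈ nhds (z i), ∃ h : ℂ → ℂ, DifferentiableOn ℂ h V ∧
      ∀ w ∈ V \ {z i}, h w = g w - R i w)
    (t : ℂ) (htU : t ∈ U) (ht : t ∉ γ '' Set.Icc 0 1) (ht' : ∀ i, t ≠ z i) :
    cauchyTypeIntegral γ γ' g t =
      windingNumber γ γ' t * g t - ∑ i, windingNumber γ γ' (z i) * R i t := by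
  classical
  have hγc : ContinuousOn γ (Icc 0 1) := hγ.1
  have hγ'int : IntervalIntegrable γ' volume 0 1 := hγ.2.1
  obtain ⟨S, hγd, hγ'c⟩ := hγ.2.2
  choose V hVmem hfun hfdiff hfeq using hmero
  -- the holomorphic extension of g - ∑ R i
  set G : ℂ → ℂ := fun w =>
    if hw : ∃ i, w = z i then
      hfun hw.choose w - ∑ j ∈ Finset.univ.erase hw.choose, R j w
    else g w - ∑ j, R j w with hGdef
  have hrange_ne : ∀ w : ℂ, w ∉ Set.range z → G w = g w - ∑ j, R j w := by
    intro w hw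
    rw [hGdef]
    simp only
    rw [dif_neg]
    rintro ⟨i, hi⟩
    exact hw ⟨i, hi.symm⟩
  have hGz : ∀ i, G (z i) = hfun i (z i) - ∑ j ∈ Finset.univ.erase i, R j (z i) := by
    intro i
    have hex : ∃ j, z i = z j := ⟨i, rfl⟩
    rw [hGdef]
    simp only
    rw [dif_pos hex]
    have hch : hex.choose = i := hz hex.choose_spec.symm
    rw [hch]
  have hRdiff : ∀ i : Fin l, DifferentiableOn ℂ (R i) {z i}ᶜ := by
    intro i
    have hRi : R i = fun w => ∑ j ∈ Finset.Icc 1 (k i), α i j / (w - z i) ^ j :=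
      funext (hR i)
    rw [hRi]
    apply DifferentiableOn.fun_sum
    intro j _
    apply DifferentiableOn.div (differentiableOn_const _)
    · exact (differentiableOn_id.sub (differentiableOn_const _)).pow _
    · intro w hw
      exact pow_ne_zero _ (sub_ne_zero.2 hw)
  have hzclosed : IsClosed (Set.range z) := (Set.finite_range z).isClosed
  -- differentiability of G on U
  have hGdiffAt : ∀ p ∈ U, DifferentiableAt ℂ G p := by
    intro p hpU
    by_cases hp : p ∈ Set.range z
    · obtain ⟨i, rfl⟩ := hp
      set T : Set ℂ := Set.range z \ {z i} with hTdef
      have hTfin : T.Finite := (Set.finite_range z).subset diff_subset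
      have hT : IsClosed T := hTfin.isClosed
      have hzT : z i ∉ T := fun h => h.2 rfl
      have hO : interior (V i) ∩ Tᶜ ∈ nhds (z i) :=
        Filter.inter_mem (interior_mem_nhds.mpr (hVmem i)) (hT.isOpen_compl.mem_nhds hzT)
      have hψdiff : DifferentiableOn ℂ
          (fun w => hfun i w - ∑ j ∈ Finset.univ.erase i, R j w) (interior (V i) ∩ Tᶜ) := by
        apply DifferentiableOn.sub
        · exact (hfdiff i).mono ((inter_subset_left).trans interior_subset)
        · apply DifferentiableOn.fun_sum
          intro j hj
          apply (hRdiff j).mono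
          intro w hw hcon
          have hji : j ≠ i := Finset.ne_of_mem_erase hj
          apply hw.2
          refine ⟨⟨j, hcon.symm⟩, ?_⟩
          intro hwz
          have : w = z i := hwz
          have : z j = z i := by rw [← hcon]; exact this
          exact hji (hz this)
      have hψG : ∀ w ∈ interior (V i) ∩ Tᶜ,
          G w = hfun i w - ∑ j ∈ Finset.univ.erase i, R j w := by
        intro w hw
        by_cases hwzi : w = z i
        · subst hwzi; exact hGz i
        · have hwr : w ∉ Set.range z := by
            rintro ⟨j, rfl⟩
            by_cases hji : j = i
            · exact hwzi (by rw [hji])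
            · exact hw.2 ⟨⟨j, rfl⟩, fun hmem => hji (hz hmem)⟩
          rw [hrange_ne w hwr]
          have heq := hfeq i w ⟨interior_subset hw.1, hwzi⟩
          rw [heq, ← Finset.add_sum_erase _ _ (Finset.mem_univ i)]
          ring
      refine (hψdiff.differentiableAt hO).congr_of_eventuallyEq ?_
      filter_upwards [hO] with w hw
      exact hψG w hw
    · have hO : U ∩ (Set.range z)ᶜ ∈ nhds p :=
        (hUopen.inter hzclosed.isOpen_compl).mem_nhds ⟨hpU, hp⟩
      have hdiff2 : DifferentiableOn ℂ (fun w => g w - ∑ j, R j w) (U ∩ (Set.range z)ᶜ) := by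
        apply DifferentiableOn.sub
        · exact hg.mono fun w hw => ⟨hw.1, hw.2⟩
        · apply DifferentiableOn.fun_sum
          intro j _
          apply (hRdiff j).mono
          intro w hw hcon
          exact hw.2 ⟨j, hcon.symm⟩
      refine (hdiff2.differentiableAt hO).congr_of_eventuallyEq ?_
      filter_upwards [hzclosed.isOpen_compl.mem_nhds hp] with w hw
      exact hrange_ne w hw
  have hGdiff : DifferentiableOn ℂ G U := fun p hp => (hGdiffAt p hp).differentiableWithinAt
  have hddiff : DifferentiableOn ℂ (dslope G t) U :=
    (Complex.differentiableOn_dslope (hUopen.mem_nhds htU)).mpr hGdiff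
  -- the tail functions with explicit primitives
  set TT : Fin l → ℂ → ℂ := fun i w => ∑ j ∈ Finset.Icc 1 (k i), α i j *
      ∑ m ∈ Finset.range (j-1), ((t - z i) ^ (j-1-m))⁻¹ * ((w - z i) ^ (m + 2))⁻¹ with hTTdef
  -- continuity helpers
  have hinvc : ∀ (p : ℂ) (m : ℕ), ContinuousOn (fun w : ℂ => ((w - p) ^ m)⁻¹) {p}ᶜ := by
    intro p m
    apply ContinuousOn.inv₀
    · exact ((continuous_id.sub continuous_const).pow m).continuousOn
    · intro w hw
      exact pow_ne_zero _ (sub_ne_zero.2 hw)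
  have hinv1 : ∀ p : ℂ, ContinuousOn (fun w : ℂ => (w - p)⁻¹) {p}ᶜ := by
    intro p
    apply ContinuousOn.inv₀
    · exact (continuous_id.sub continuous_const).continuousOn
    · intro w hw
      exact sub_ne_zero.2 hw
  have hTTc : ∀ i, ContinuousOn (TT i) {z i}ᶜ := by
    intro i
    apply continuousOn_finset_sum
    intro j _
    apply ContinuousOn.mul continuousOn_const
    apply continuousOn_finset_sum
    intro m _
    exact ContinuousOn.mul continuousOn_const (hinvc (z i) (m+2))
  -- image avoidance
  have himt : γ '' Icc 0 1 ⊆ ({t}ᶜ : Set ℂ) := by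
    intro w hw hcon
    exact ht (by rwa [show w = t from hcon] at hw)
  have himz : ∀ i, γ '' Icc 0 1 ⊆ ({z i}ᶜ : Set ℂ) := by
    intro i w hw hcon
    exact havoid i (by rwa [show w = z i from hcon] at hw)
  -- integrability of all integrands
  have hJint : ∀ (q : ℂ → ℂ) (Vq : Set ℂ), ContinuousOn q Vq → γ '' Icc 0 1 ⊆ Vq →
      IntervalIntegrable (fun s => q (γ s) * γ' s) volume 0 1 := by
    intro q Vq hq him
    apply hγ'int.continuousOn_mul
    rw [uIcc_of_le zero_le_one]
    exact hq.comp hγc fun s hs => him ⟨s, hs, rfl⟩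
  have hAint : IntervalIntegrable (fun s => dslope G t (γ s) * γ' s) volume 0 1 :=
    hJint (dslope G t) U hddiff.continuousOn himage
  have hBtint : IntervalIntegrable (fun s => (γ s - t)⁻¹ * γ' s) volume 0 1 :=
    hJint (fun w => (w - t)⁻¹) _ (hinv1 t) himt
  have hBzint : ∀ i, IntervalIntegrable (fun s => (γ s - z i)⁻¹ * γ' s) volume 0 1 :=
    fun i => hJint (fun w => (w - z i)⁻¹) _ (hinv1 (z i)) (himz i)
  have hCint : ∀ i, IntervalIntegrable (fun s => TT i (γ s) * γ' s) volume 0 1 :=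
    fun i => hJint (TT i) _ (hTTc i) (himz i)
  -- the two vanishing integrals
  have hA0 : ∫ s in (0:ℝ)..1, dslope G t (γ s) * γ' s = 0 :=
    aux_cauchy_sc hUopen hUsc ⟨hγc, hγ'int, S, hγd, hγ'c⟩ hclosed himage hddiff hAint
  have hC0 : ∀ i, ∫ s in (0:ℝ)..1, TT i (γ s) * γ' s = 0 := by
    intro i
    have hP : ∀ w ∈ ({z i}ᶜ : Set ℂ), HasDerivAt (fun u => ∑ j ∈ Finset.Icc 1 (k i), α i j *
        ∑ m ∈ Finset.range (j-1), ((t - z i) ^ (j-1-m))⁻¹ *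
          ((-(m+1) : ℂ)⁻¹ * ((u - z i)^(m+1))⁻¹)) (TT i w) w := by
      intro w hw
      apply HasDerivAt.fun_sum
      intro j _
      apply HasDerivAt.const_mul
      apply HasDerivAt.fun_sum
      intro m _
      exact (aux_pole_prim hw m).const_mul _
    have := aux_ftc_curve hγc hγd le_rfl zero_le_one le_rfl
      isOpen_compl_singleton hP (himz i) (hCint i)
    rw [this, hclosed, sub_self]
  -- pointwise partial fraction identity along the curve
  have hper : ∀ (i : Fin l), ∀ s ∈ Icc (0:ℝ) 1,
      (γ s - t)⁻¹ * R i (γ s) * γ' s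
      = R i t * ((γ s - t)⁻¹ * γ' s) - R i t * ((γ s - z i)⁻¹ * γ' s) - TT i (γ s) * γ' s := by
    intro i s hs
    have hsimg : γ s ∈ γ '' Icc 0 1 := ⟨s, hs, rfl⟩
    have hwt : γ s ≠ t := fun h => ht (h ▸ hsimg)
    have hwz : γ s ≠ z i := fun h => havoid i (h ▸ hsimg)
    have h := aux_pf hwt hwz (ht' i) (k i) (α i)
    rw [hR i (γ s), hR i t]
    simp only [hTTdef]
    linear_combination (γ' s) * h
  -- the main pointwise identity
  have hmain : ∀ s ∈ Icc (0:ℝ) 1, (γ s - t)⁻¹ * g (γ s) * γ' s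
      = dslope G t (γ s) * γ' s + G t * ((γ s - t)⁻¹ * γ' s)
        + ∑ i, (R i t * ((γ s - t)⁻¹ * γ' s) - R i t * ((γ s - z i)⁻¹ * γ' s)
            - TT i (γ s) * γ' s) := by
    intro s hs
    have hsimg : γ s ∈ γ '' Icc 0 1 := ⟨s, hs, rfl⟩
    have hwt : γ s ≠ t := fun h => ht (h ▸ hsimg)
    have hwr : γ s ∉ Set.range z := by
      rintro ⟨i, hi⟩
      apply havoid i
      rw [hi]
      exact hsimg
    have hds : dslope G t (γ s) = (G (γ s) - G t) * (γ s - t)⁻¹ := by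
      rw [dslope_of_ne G hwt, slope_def_field, div_eq_mul_inv]
    have hGs : G (γ s) = g (γ s) - ∑ j, R j (γ s) := hrange_ne _ hwr
    have hexp : ∑ i, ((γ s - t)⁻¹ * R i (γ s) * γ' s)
        = (∑ j, R j (γ s)) * ((γ s - t)⁻¹ * γ' s) := by
      rw [Finset.sum_mul]
      exact Finset.sum_congr rfl fun i _ => by ring
    have hsumeq : ∑ i, (R i t * ((γ s - t)⁻¹ * γ' s) - R i t * ((γ s - z i)⁻¹ * γ' s)
        - TT i (γ s) * γ' s) = (∑ j, R j (γ s)) * ((γ s - t)⁻¹ * γ' s) := by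
      rw [← hexp]
      exact Finset.sum_congr rfl fun i _ => (hper i s hs).symm
    rw [hsumeq, hds, hGs]
    ring
  -- integrate the identity
  have hkey : ∫ s in (0:ℝ)..1, (γ s - t)⁻¹ * g (γ s) * γ' s
      = G t * (∫ s in (0:ℝ)..1, (γ s - t)⁻¹ * γ' s)
        + ∑ i, (R i t * (∫ s in (0:ℝ)..1, (γ s - t)⁻¹ * γ' s)
            - R i t * (∫ s in (0:ℝ)..1, (γ s - z i)⁻¹ * γ' s)) := by
    have hcongr : ∫ s in (0:ℝ)..1, (γ s - t)⁻¹ * g (γ s) * γ' s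
        = ∫ s in (0:ℝ)..1, (dslope G t (γ s) * γ' s + G t * ((γ s - t)⁻¹ * γ' s)
          + ∑ i, (R i t * ((γ s - t)⁻¹ * γ' s) - R i t * ((γ s - z i)⁻¹ * γ' s)
              - TT i (γ s) * γ' s)) := by
      apply intervalIntegral.integral_congr
      intro s hs
      exact hmain s (by rwa [uIcc_of_le zero_le_one] at hs)
    rw [hcongr]
    have hterm : ∀ i : Fin l, IntervalIntegrable (fun s => R i t * ((γ s - t)⁻¹ * γ' s)
        - R i t * ((γ s - z i)⁻¹ * γ' s) - TT i (γ s) * γ' s) volume 0 1 :=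
      fun i => ((hBtint.const_mul _).sub ((hBzint i).const_mul _)).sub (hCint i)
    have hsumint : IntervalIntegrable (fun s => ∑ i, (R i t * ((γ s - t)⁻¹ * γ' s)
        - R i t * ((γ s - z i)⁻¹ * γ' s) - TT i (γ s) * γ' s)) volume 0 1 := by
      have h1 := IntervalIntegrable.sum (μ := volume) (a := (0:ℝ)) (b := (1:ℝ))
        Finset.univ (fun i (_ : i ∈ Finset.univ) => hterm i)
      have h2 : (fun s => ∑ i, (R i t * ((γ s - t)⁻¹ * γ' s)
          - R i t * ((γ s - z i)⁻¹ * γ' s) - TT i (γ s) * γ' s))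
          = ∑ i ∈ Finset.univ, (fun s => R i t * ((γ s - t)⁻¹ * γ' s)
          - R i t * ((γ s - z i)⁻¹ * γ' s) - TT i (γ s) * γ' s) := by
        funext s
        simp [Finset.sum_apply]
      rw [h2]
      exact h1
    rw [intervalIntegral.integral_add (hAint.add (hBtint.const_mul (G t))) hsumint,
      intervalIntegral.integral_add hAint (hBtint.const_mul (G t)),
      hA0, zero_add, intervalIntegral.integral_const_mul,
      intervalIntegral.integral_finset_sum (fun i _ => hterm i)]
    congr 1
    apply Finset.sum_congr rfl
    intro i _
    rw [intervalIntegral.integral_sub ((hBtint.const_mul _).sub ((hBzint i).const_mul _))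
        (hCint i),
      intervalIntegral.integral_sub (hBtint.const_mul _) ((hBzint i).const_mul _),
      hC0 i, sub_zero,
      intervalIntegral.integral_const_mul, intervalIntegral.integral_const_mul]
  -- final assembly
  have hGt : G t = g t - ∑ j, R j t := by
    apply hrange_ne t
    rintro ⟨i, hi⟩
    exact ht' i hi.symm
  have hct : cauchyTypeIntegral γ γ' g t
      = (1 / (2 * Real.pi * Complex.I)) * ∫ s in (0:ℝ)..1, (γ s - t)⁻¹ * g (γ s) * γ' s := by
    unfold cauchyTypeIntegral
    congr 1
    apply intervalIntegral.integral_congr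
    intro s _
    simp only [div_eq_mul_inv]
    ring
  have hwnt : windingNumber γ γ' t
      = (1 / (2 * Real.pi * Complex.I)) * ∫ s in (0:ℝ)..1, (γ s - t)⁻¹ * γ' s := by
    unfold windingNumber
    congr 1
    apply intervalIntegral.integral_congr
    intro s _
    simp only [div_eq_mul_inv]
    ring
  have hwnz : ∀ i, windingNumber γ γ' (z i)
      = (1 / (2 * Real.pi * Complex.I)) * ∫ s in (0:ℝ)..1, (γ s - z i)⁻¹ * γ' s := by
    intro i
    unfold windingNumber
    congr 1
    apply intervalIntegral.integral_congr
    intro s _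
    simp only [div_eq_mul_inv]
    ring
  rw [hct, hkey, hGt, hwnt]
  rw [show ∑ i, windingNumber γ γ' (z i) * R i t
      = ∑ i, ((1 / (2 * Real.pi * Complex.I)) * (∫ s in (0:ℝ)..1, (γ s - z i)⁻¹ * γ' s)) * R i t
    from Finset.sum_congr rfl fun i _ => by rw [hwnz i]]
  have e1 : ∑ i, (R i t * (∫ s in (0:ℝ)..1, (γ s - t)⁻¹ * γ' s)
      - R i t * (∫ s in (0:ℝ)..1, (γ s - z i)⁻¹ * γ' s))
      = (∑ i, R i t) * (∫ s in (0:ℝ)..1, (γ s - t)⁻¹ * γ' s)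
        - ∑ i, (R i t * (∫ s in (0:ℝ)..1, (γ s - z i)⁻¹ * γ' s)) := by
    rw [Finset.sum_sub_distrib, Finset.sum_mul]
  have e2 : ∑ i, ((1 / (2 * Real.pi * Complex.I)) * (∫ s in (0:ℝ)..1, (γ s - z i)⁻¹ * γ' s)) * R i t
      = (1 / (2 * Real.pi * Complex.I)) * ∑ i, (R i t * (∫ s in (0:ℝ)..1, (γ s - z i)⁻¹ * γ' s)) := by
    rw [Finset.mul_sum]
    exact Finset.sum_congr rfl fun i _ => by ring
  rw [e1, e2]
  ring
end

section
/- Let T_n denote the n-th Chebyshev polynomial of the first kind, and set a = −√3/2, b = √3/2, P = T₆ and Q = T₂ + T₃. Then: (i) for every integer k ≥ 0 the one-sided moment vanishes, ∫_a^b T₆(x)^k (T₂(x) + T₃(x)) T₆'(x) dx = 0; and yet (ii) there exist no complex polynomials P̃, Q̃, W with deg W ≥ 2 such that T₆ = P̃ ∘ W and T₂ + T₃ = Q̃ ∘ W. In particular all the moments m_k(P,Q) vanish although the polynomial composition condition fails for (T₆, T₂ + T₃, a, b). -/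
open Polynomial Polynomial.Chebyshev intervalIntegral

theorem stmt8 :
    (∀ k : ℕ, ∫ x in (-(Real.sqrt 3 / 2))..(Real.sqrt 3 / 2),
        ((T ℝ 6).eval x) ^ k * ((T ℝ 2 + T ℝ 3).eval x) * ((T ℝ 6).derivative.eval x)
          = (0:ℝ)) ∧
    ¬ ∃ (Pt Qt W : Polynomial ℂ), 2 ≤ W.natDegree ∧
        T ℂ 6 = Pt.comp W ∧ T ℂ 2 + T ℂ 3 = Qt.comp W := by
  constructor
  · intro k
    have h3 : T ℝ 3 = 4*X^3 - 3*X := by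
      have h := T_add_two ℝ 1
      norm_num [T_two] at h
      rw [h]; ring
    have h23 : T ℝ 6 = (T ℝ 2).comp (T ℝ 3) := by have := T_mul ℝ 2 3; norm_num at this; exact this
    have h32 : T ℝ 6 = (T ℝ 3).comp (T ℝ 2) := by have := T_mul ℝ 3 2; norm_num at this; exact this
    set g2 : ℝ → ℝ := fun u => ((T ℝ 3).eval u) ^ k * u * ((T ℝ 3).derivative.eval u) with hg2
    set g3 : ℝ → ℝ := fun u => ((T ℝ 2).eval u) ^ k * u * ((T ℝ 2).derivative.eval u) with hg3
    have e23 : ∀ x : ℝ, (T ℝ 6).eval x = (T ℝ 2).eval ((T ℝ 3).eval x) := by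
      intro x; rw [h23, eval_comp]
    have d23 : ∀ x : ℝ, (T ℝ 6).derivative.eval x
        = (T ℝ 3).derivative.eval x * (T ℝ 2).derivative.eval ((T ℝ 3).eval x) := by
      intro x; nth_rewrite 1 [h23]; rw [derivative_comp, eval_mul, eval_comp]
    have e32 : ∀ x : ℝ, (T ℝ 6).eval x = (T ℝ 3).eval ((T ℝ 2).eval x) := by
      intro x; rw [h32, eval_comp]
    have d32 : ∀ x : ℝ, (T ℝ 6).derivative.eval x
        = (T ℝ 2).derivative.eval x * (T ℝ 3).derivative.eval ((T ℝ 2).eval x) := by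
      intro x; nth_rewrite 1 [h32]; rw [derivative_comp, eval_mul, eval_comp]
    have key : ∀ x : ℝ, ((T ℝ 6).eval x) ^ k * ((T ℝ 2 + T ℝ 3).eval x) * ((T ℝ 6).derivative.eval x)
        = ((T ℝ 2).derivative.eval x) * g2 ((T ℝ 2).eval x)
          + ((T ℝ 3).derivative.eval x) * g3 ((T ℝ 3).eval x) := by
      intro x
      have A : ((T ℝ 6).eval x) ^ k * ((T ℝ 2).eval x) * ((T ℝ 6).derivative.eval x)
          = ((T ℝ 2).derivative.eval x) * g2 ((T ℝ 2).eval x) := by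
        rw [e32 x, d32 x, hg2]; ring
      have B : ((T ℝ 6).eval x) ^ k * ((T ℝ 3).eval x) * ((T ℝ 6).derivative.eval x)
          = ((T ℝ 3).derivative.eval x) * g3 ((T ℝ 3).eval x) := by
        rw [e23 x, d23 x, hg3]; ring
      rw [eval_add]
      linear_combination A + B
    simp only [key]
    have cg2 : Continuous g2 := by
      rw [hg2]; exact (((T ℝ 3).continuous.pow k).mul continuous_id).mul (T ℝ 3).derivative.continuous
    have cg3 : Continuous g3 := by
      rw [hg3]; exact (((T ℝ 2).continuous.pow k).mul continuous_id).mul (T ℝ 2).derivative.continuous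
    have c2 : Continuous fun x : ℝ => ((T ℝ 2).derivative.eval x) * g2 ((T ℝ 2).eval x) :=
      (T ℝ 2).derivative.continuous.mul (cg2.comp (T ℝ 2).continuous)
    have c3 : Continuous fun x : ℝ => ((T ℝ 3).derivative.eval x) * g3 ((T ℝ 3).eval x) :=
      (T ℝ 3).derivative.continuous.mul (cg3.comp (T ℝ 3).continuous)
    rw [integral_add (c2.intervalIntegrable _ _) (c3.intervalIntegrable _ _)]
    have I2 : ∫ x in (-(Real.sqrt 3 / 2))..(Real.sqrt 3 / 2),
        ((T ℝ 2).derivative.eval x) * g2 ((T ℝ 2).eval x) = 0 := by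
      have key2 := integral_comp_smul_deriv (a := -(Real.sqrt 3 / 2)) (b := Real.sqrt 3 / 2)
        (f := fun x => (T ℝ 2).eval x)
        (f' := fun x => (T ℝ 2).derivative.eval x) (g := g2)
        (fun x _ => (T ℝ 2).hasDerivAt x) (T ℝ 2).derivative.continuous.continuousOn cg2
      simp only [smul_eq_mul, Function.comp] at key2
      rw [key2]
      have : (T ℝ 2).eval (-(Real.sqrt 3 / 2)) = (T ℝ 2).eval (Real.sqrt 3 / 2) := by
        simp [T_two]
      rw [this, integral_same]
    have I3 : ∫ x in (-(Real.sqrt 3 / 2))..(Real.sqrt 3 / 2),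
        ((T ℝ 3).derivative.eval x) * g3 ((T ℝ 3).eval x) = 0 := by
      have key3 := integral_comp_smul_deriv (a := -(Real.sqrt 3 / 2)) (b := Real.sqrt 3 / 2)
        (f := fun x => (T ℝ 3).eval x)
        (f' := fun x => (T ℝ 3).derivative.eval x) (g := g3)
        (fun x _ => (T ℝ 3).hasDerivAt x) (T ℝ 3).derivative.continuous.continuousOn cg3
      simp only [smul_eq_mul, Function.comp] at key3
      rw [key3]
      have hs : Real.sqrt 3 ^ 2 = 3 := Real.sq_sqrt (by norm_num)
      have e1 : (T ℝ 3).eval (-(Real.sqrt 3 / 2)) = 0 := by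
        rw [h3]; simp; linear_combination (-(Real.sqrt 3 / 2)) * hs
      have e2 : (T ℝ 3).eval (Real.sqrt 3 / 2) = 0 := by
        rw [h3]; simp; linear_combination (Real.sqrt 3 / 2) * hs
      rw [e1, e2, integral_same]
    rw [I2, I3, add_zero]
  · rintro ⟨Pt, Qt, W, hW, hP, hQ⟩
    have h3 : T ℂ 3 = 4*X^3 - 3*X := by
      have h := T_add_two ℂ 1
      norm_num [T_two] at h
      rw [h]; ring
    have hS : T ℂ 2 + T ℂ 3 = 4*X^3 + 2*X^2 - 3*X - 1 := by rw [T_two, h3]; ring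
    have h23 : T ℂ 6 = (T ℂ 2).comp (T ℂ 3) := by have := T_mul ℂ 2 3; norm_num at this; exact this
    have hT6 : T ℂ 6 = 32*X^6 - 48*X^4 + 18*X^2 - 1 := by
      rw [h23, T_two, h3]
      simp only [sub_comp, mul_comp, pow_comp, X_comp, one_comp, ofNat_comp]
      ring
    have nS : (T ℂ 2 + T ℂ 3).natDegree = 3 := by rw [hS]; compute_degree!
    have n6 : (T ℂ 6).natDegree = 6 := by rw [hT6]; compute_degree!
    have hq : Qt.natDegree * W.natDegree = 3 := by rw [← natDegree_comp, ← hQ, nS]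
    have hp : Pt.natDegree * W.natDegree = 6 := by rw [← natDegree_comp, ← hP, n6]
    have hw3 : W.natDegree = 3 := by
      have h1 : Qt.natDegree ∣ 3 := ⟨_, hq.symm⟩
      rcases (Nat.prime_three.eq_one_or_self_of_dvd _ h1) with h | h <;> rw [h] at hq <;> omega
    rw [hw3] at hq hp
    have hq1 : Qt.natDegree = 1 := by omega
    have hp2 : Pt.natDegree = 2 := by omega
    have hQform : Qt = C (Qt.coeff 0) + C (Qt.coeff 1) * X := by
      have := Qt.as_sum_range' 2 (by omega)
      simpa [Finset.sum_range_succ, Polynomial.monomial_zero_left,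
        Polynomial.monomial_one_one_eq_X, ← Polynomial.C_mul_X_pow_eq_monomial, pow_one] using this
    set q0 := Qt.coeff 0 with hq0def
    set q1 := Qt.coeff 1 with hq1def
    have hq1ne : q1 ≠ 0 := by
      have h0 : Qt ≠ 0 := fun h => by simp [h] at hq1
      have : q1 = Qt.leadingCoeff := by rw [Polynomial.leadingCoeff, hq1]
      rw [this]
      exact Polynomial.leadingCoeff_ne_zero.mpr h0
    -- W in terms of S
    have hWform : W = C q1⁻¹ * ((T ℂ 2 + T ℂ 3) - C q0) := by
      rw [hQ, hQform]
      simp only [add_comp, mul_comp, C_comp, X_comp]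
      rw [add_sub_cancel_left, ← mul_assoc, ← Polynomial.C_mul, inv_mul_cancel₀ hq1ne, Polynomial.C_1, one_mul]
    set R : ℂ[X] := Pt.comp (C q1⁻¹ * (X - C q0)) with hRdef
    have hRS : R.comp (T ℂ 2 + T ℂ 3) = T ℂ 6 := by
      rw [hRdef, Polynomial.comp_assoc]
      simp only [mul_comp, sub_comp, C_comp, X_comp]
      rw [← hWform, ← hP]
    have nR : R.natDegree < 3 := by
      rw [hRdef, natDegree_comp, hp2]
      have : (C q1⁻¹ * (X - C q0)).natDegree ≤ 1 := by compute_degree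
      omega
    have hRform : R = C (R.coeff 0) + C (R.coeff 1) * X + C (R.coeff 2) * X^2 := by
      have := R.as_sum_range' 3 nR
      simpa [Finset.sum_range_succ, Polynomial.monomial_zero_left,
        Polynomial.monomial_one_one_eq_X, ← Polynomial.C_mul_X_pow_eq_monomial, pow_one] using this
    rw [hRform] at hRS
    simp only [add_comp, mul_comp, pow_comp, C_comp, X_comp] at hRS
    rw [hS, hT6] at hRS
    have hsq : ((4*X^3 + 2*X^2 - 3*X - 1 : ℂ[X]))^2
        = 16*X^6 + 16*X^5 - 20*X^4 - 20*X^3 + 5*X^2 + 6*X + 1 := by ring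
    rw [hsq] at hRS
    have h6 := congrArg (fun p => Polynomial.coeff p 6) hRS
    have h5 := congrArg (fun p => Polynomial.coeff p 5) hRS
    simp [coeff_X, coeff_one] at h5 h6
    rw [h5] at h6
    norm_num at h6
end

section
/- Let a < b be real numbers and let P be a polynomial with real coefficients such that P(a) = P(b) = 0 and P(x) > 0 for all x ∈ (a,b). Then P possesses Property (E) with respect to a and b: there exists a piecewise continuously differentiable path Γ : [0,1] → ℂ with Γ(0) = a and Γ(1) = b such that P(Γ(s)) = 0 only for s = 0 and s = 1, and 0 lies in the closure of the unbounded connected component of ℂ \ (P∘Γ)([0,1]). -/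
open MeasureTheory Set Polynomial

/-- Property (E) for a complex polynomial `P` with `P(a) = P(b) = 0`: there is a
piecewise `C¹` path `Γ` from `a` to `b` such that `0` is a simple point of the closed
curve `γ = P ∘ Γ` and `0` lies on the boundary of the unbounded (exterior) component of
the complement of the image of `γ`. -/
def PropertyE (P : Polynomial ℂ) (a b : ℂ) : Prop :=
  ∃ Γ Γ' : ℝ → ℂ, PiecewiseC1 Γ Γ' ∧ Γ 0 = a ∧ Γ 1 = b ∧
    (∀ s ∈ Set.Icc (0:ℝ) 1, P.eval (Γ s) = 0 → s = 0 ∨ s = 1) ∧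
    ∃ t₀ ∈ ((fun s => P.eval (Γ s)) '' Set.Icc 0 1)ᶜ,
      ¬ Bornology.IsBounded
          (connectedComponentIn ((fun s => P.eval (Γ s)) '' Set.Icc 0 1)ᶜ t₀) ∧
      (0:ℂ) ∈ closure (connectedComponentIn ((fun s => P.eval (Γ s)) '' Set.Icc 0 1)ᶜ t₀)

lemma negSlit_preconnected : IsPreconnected ((fun z : ℂ => -z) '' Complex.slitPlane) := by
  have h : ContractibleSpace ↥Complex.slitPlane :=
    Complex.starConvex_one_slitPlane.contractibleSpace ⟨1, Complex.one_mem_slitPlane⟩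
  have hp : IsPathConnected Complex.slitPlane := by
    rw [isPathConnected_iff_pathConnectedSpace]; infer_instance
  exact (hp.isConnected.isPreconnected).image _ continuous_neg.continuousOn

theorem stmt14 (a b : ℝ) (hab : a < b) (P : Polynomial ℝ)
    (hPa : P.eval a = 0) (hPb : P.eval b = 0)
    (hpos : ∀ x : ℝ, a < x → x < b → 0 < P.eval x) :
    PropertyE (P.map (algebraMap ℝ ℂ)) (a : ℂ) (b : ℂ) := by
  set Γ : ℝ → ℂ := fun s => ((a + s * (b - a) : ℝ) : ℂ) with hΓ
  set Γ' : ℝ → ℂ := fun _ => ((b - a : ℝ) : ℂ) with hΓ'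
  have heval : ∀ r : ℝ, (P.map (algebraMap ℝ ℂ)).eval (r : ℂ) = ((P.eval r : ℝ) : ℂ) := by
    intro r
    rw [Polynomial.eval_map]
    exact (Polynomial.eval₂_at_apply _ _).trans rfl
  have hnn : ∀ x : ℝ, a ≤ x → x ≤ b → 0 ≤ P.eval x := by
    intro x hax hxb
    rcases eq_or_lt_of_le hax with h | h
    · rw [← h, hPa]
    rcases eq_or_lt_of_le hxb with h' | h'
    · rw [h', hPb]
    exact (hpos x h h').le
  -- image lies on the nonnegative real axis
  have himg : ∀ z ∈ (fun s => (P.map (algebraMap ℝ ℂ)).eval (Γ s)) '' Set.Icc (0:ℝ) 1,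
      z.im = 0 ∧ 0 ≤ z.re := by
    rintro z ⟨s, hs, rfl⟩
    simp only [hΓ, heval]
    have hx1 : a ≤ a + s * (b - a) := by nlinarith [hs.1, hs.2]
    have hx2 : a + s * (b - a) ≤ b := by nlinarith [hs.1, hs.2]
    exact ⟨Complex.ofReal_im _, by simpa using hnn _ hx1 hx2⟩
  set V : Set ℂ := (fun z : ℂ => -z) '' Complex.slitPlane with hV
  have hmemV : ∀ z : ℂ, -z ∈ Complex.slitPlane → z ∈ V := fun z hz => ⟨-z, hz, by ring⟩
  have hVsub : V ⊆ ((fun s => (P.map (algebraMap ℝ ℂ)).eval (Γ s)) '' Set.Icc (0:ℝ) 1)ᶜ := by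
    rintro z ⟨w, hw, rfl⟩ hz
    obtain ⟨him, hre⟩ := himg _ hz
    rcases hw with h | h
    · simp only [Complex.neg_re] at hre; linarith
    · simp only [Complex.neg_im] at him
      exact h (by simpa using congrArg Neg.neg him)
  have ht₀V : (-1 : ℂ) ∈ V := hmemV _ (by simpa using Complex.one_mem_slitPlane)
  have hcomp : V ⊆ connectedComponentIn
      ((fun s => (P.map (algebraMap ℝ ℂ)).eval (Γ s)) '' Set.Icc (0:ℝ) 1)ᶜ (-1) :=
    negSlit_preconnected.subset_connectedComponentIn ht₀V hVsub
  refine ⟨Γ, Γ', ?_, by simp [hΓ], by push_cast [hΓ]; ring_nf, ?_, (-1 : ℂ), hVsub ht₀V, ?_, ?_⟩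
  · refine ⟨?_, intervalIntegrable_const, ∅, ?_, continuousOn_const⟩
    · exact (Complex.continuous_ofReal.comp (by continuity)).continuousOn
    · intro s _
      have h1 : HasDerivAt (fun t : ℝ => (t : ℂ)) 1 s := by
        simpa using (hasDerivAt_id s).ofReal_comp
      have : HasDerivAt Γ ((b - a : ℝ) : ℂ) s := by
        have := ((h1.mul_const (((b:ℝ):ℂ) - ((a:ℝ):ℂ))).const_add ((a:ℝ):ℂ))
        simp only [one_mul] at this
        have e1 : Γ = fun x : ℝ => (a:ℂ) + (x:ℂ) * ((b:ℂ) - (a:ℂ)) := by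
          funext t; simp only [hΓ]; push_cast; ring
        rw [e1, Complex.ofReal_sub]; exact this
      exact this.hasDerivWithinAt
  · -- simple point
    intro s hs h0
    rw [hΓ] at h0
    simp only [heval] at h0
    have h0' : P.eval (a + s * (b - a)) = 0 := by exact_mod_cast h0
    by_contra hcon
    push_neg at hcon
    have hs0 : 0 < s := lt_of_le_of_ne hs.1 (Ne.symm hcon.1)
    have hs1 : s < 1 := lt_of_le_of_ne hs.2 hcon.2
    have := hpos (a + s * (b - a)) (by nlinarith) (by nlinarith)
    linarith
  · -- unbounded
    intro hb
    obtain ⟨R, hR⟩ := hb.exists_norm_le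
    have hR1 : (1:ℝ) ≤ R := by
      simpa using hR _ (mem_connectedComponentIn (hVsub ht₀V))
    have hz : (((-(R+1) : ℝ)) : ℂ) ∈ V := by
      refine hmemV _ ?_
      left
      have : (-(((-(R+1) : ℝ)) : ℂ)) = (((R+1 : ℝ)) : ℂ) := by push_cast; ring
      rw [this, Complex.ofReal_re]
      linarith
    have hle := hR _ (hcomp hz)
    rw [Complex.norm_real, Real.norm_eq_abs, abs_neg, abs_of_pos (by linarith)] at hle
    linarith
  · -- 0 in closure
    refine closure_mono hcomp ?_
    rw [Metric.mem_closure_iff]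
    intro ε hε
    refine ⟨Complex.I * ((ε:ℂ)/2), hmemV _ ?_, ?_⟩
    · right
      have him : (-(Complex.I * ((ε:ℂ)/2))).im = -(ε/2) := by simp
      rw [him]
      intro h; linarith
    · rw [dist_comm, Complex.dist_eq, sub_zero]
      rw [norm_mul, Complex.norm_I, one_mul]
      have : ((ε:ℂ)/2) = (((ε/2 : ℝ)) : ℂ) := by push_cast; ring
      rw [this, Complex.norm_real, Real.norm_eq_abs, abs_of_pos (by linarith)]
      linarith
end

section
/- Let 0 ≤ a < b be real numbers and let P(x) = (x − a)(b − x)P₁(x), where P₁(x) = Σ_{k=0}^n a_k x^k is a nonzero polynomial with complex coefficients a_k. If the convex hull in ℂ of the set of coefficients {a₀, a₁, …, a_n} does not contain 0, then P possesses Property (E) with respect to a and b: there exists a piecewise continuously differentiable path Γ : [0,1] → ℂ with Γ(0) = a and Γ(1) = b such that P(Γ(s)) = 0 only for s = 0 and s = 1, and 0 lies in the closure of the unbounded connected component of ℂ \ (P∘Γ)([0,1]). -/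
open MeasureTheory Set Polynomial

theorem stmt15 (a b : ℝ) (ha : 0 ≤ a) (hab : a < b)
    (n : ℕ) (co : Fin (n + 1) → ℂ)
    (P₁ : Polynomial ℂ) (hP₁ : P₁ = ∑ k : Fin (n + 1), Polynomial.C (co k) * Polynomial.X ^ (k : ℕ))
    (hP₁ne : P₁ ≠ 0)
    (hhull : (0:ℂ) ∉ convexHull ℝ (Set.range co))
    (P : Polynomial ℂ)
    (hP : P = (Polynomial.X - Polynomial.C (a : ℂ)) * (Polynomial.C (b : ℂ) - Polynomial.X) * P₁) :
    PropertyE P (a : ℂ) (b : ℂ) := by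
  -- Separate 0 from the convex hull of the coefficients
  obtain ⟨F, u, hu0, hFu⟩ := geometric_hahn_banach_point_closed
    (convex_convexHull ℝ (Set.range co))
    (((Set.finite_range co).isCompact_convexHull (𝕜 := ℝ)).isClosed) hhull
  have hFzero : F 0 = 0 := map_zero F
  have hupos : 0 < u := by rw [← hFzero]; exact hu0
  have hFco : ∀ k : Fin (n + 1), u < F (co k) := fun k =>
    hFu _ (subset_convexHull ℝ _ (Set.mem_range_self k))
  -- the path: straight segment from a to b
  set Γ : ℝ → ℂ := fun s => ((a + s * (b - a) : ℝ) : ℂ) with hΓ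
  set Γ' : ℝ → ℂ := fun _ => ((b - a : ℝ) : ℂ) with hΓ'
  -- F of P₁ evaluated at nonnegative reals is ≥ u
  have hFP₁ : ∀ t : ℝ, 0 ≤ t → u ≤ F (P₁.eval ((t : ℝ) : ℂ)) := by
    intro t ht
    have hev : P₁.eval ((t : ℝ) : ℂ) = ∑ k : Fin (n + 1), (t ^ (k : ℕ)) • co k := by
      rw [hP₁]
      simp only [Polynomial.eval_finset_sum, Polynomial.eval_mul, Polynomial.eval_C,
        Polynomial.eval_pow, Polynomial.eval_X]
      refine Finset.sum_congr rfl fun k _ => ?_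
      rw [Complex.real_smul]
      push_cast
      ring
    rw [hev, map_sum]
    have h0 : F ((t ^ ((0 : Fin (n+1)) : ℕ)) • co 0) = F (co 0) := by
      simp
    calc u ≤ F ((t ^ ((0 : Fin (n+1)) : ℕ)) • co 0) := by
            rw [h0]; exact (hFco 0).le
      _ ≤ ∑ k : Fin (n + 1), F ((t ^ (k : ℕ)) • co k) := by
            refine Finset.single_le_sum
              (f := fun k : Fin (n+1) => F ((t ^ (k : ℕ)) • co k))
              (fun k _ => ?_) (Finset.mem_univ 0)
            show (0:ℝ) ≤ F ((t ^ (k : ℕ)) • co k)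
            rw [F.map_smul, smul_eq_mul]
            exact mul_nonneg (pow_nonneg ht _) (le_of_lt (lt_trans hupos (hFco k)))
  -- key formula for F (P.eval (Γ s))
  have hkey : ∀ s : ℝ,
      F (P.eval (Γ s)) = (s * (1 - s) * (b - a) ^ 2) * F (P₁.eval (Γ s)) := by
    intro s
    have h1 : P.eval (Γ s)
        = ((s * (1 - s) * (b - a) ^ 2 : ℝ) : ℂ) * P₁.eval (Γ s) := by
      rw [hP]
      simp only [Polynomial.eval_mul, Polynomial.eval_sub, Polynomial.eval_X,
        Polynomial.eval_C, hΓ]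
      push_cast
      ring
    rw [h1, ← Complex.real_smul, F.map_smul, smul_eq_mul]
  have hΓnonneg : ∀ s ∈ Set.Icc (0:ℝ) 1, 0 ≤ a + s * (b - a) := by
    intro s hs
    have := hs.1
    nlinarith [hs.1, hs.2, hab, ha]
  have hFP₁Γ : ∀ s ∈ Set.Icc (0:ℝ) 1, u ≤ F (P₁.eval (Γ s)) := fun s hs =>
    hFP₁ _ (hΓnonneg s hs)
  -- positivity on the open interval
  have hpos : ∀ s ∈ Set.Ioo (0:ℝ) 1, 0 < F (P.eval (Γ s)) := by
    intro s hs
    rw [hkey s]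
    have hb2 : 0 < (b - a) ^ 2 := by nlinarith [hab]
    have h1 : 0 < s * (1 - s) * (b - a) ^ 2 :=
      mul_pos (mul_pos hs.1 (by linarith [hs.2])) hb2
    have h2 : 0 < F (P₁.eval (Γ s)) :=
      lt_of_lt_of_le hupos (hFP₁Γ s ⟨hs.1.le, hs.2.le⟩)
    positivity
  have hnonneg : ∀ s ∈ Set.Icc (0:ℝ) 1, 0 ≤ F (P.eval (Γ s)) := by
    intro s hs
    rw [hkey s]
    have h1 : 0 ≤ s * (1 - s) * (b - a) ^ 2 :=
      mul_nonneg (mul_nonneg hs.1 (by linarith [hs.2])) (sq_nonneg _)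
    have h2 : 0 ≤ F (P₁.eval (Γ s)) := le_trans hupos.le (hFP₁Γ s hs)
    positivity
  -- the base point t₀ in the open half plane
  have hw : 0 < F (co 0) := lt_trans hupos (hFco 0)
  set t₀ : ℂ := (-(F (co 0))⁻¹) • co 0 with ht₀def
  have hFt₀ : F t₀ = -1 := by
    rw [ht₀def, F.map_smul, smul_eq_mul]
    field_simp
  -- the open half plane
  set U : Set ℂ := F ⁻¹' (Set.Iio 0) with hUdef
  set K : Set ℂ := (fun s => P.eval (Γ s)) '' Set.Icc 0 1 with hKdef
  have hUK : U ⊆ Kᶜ := by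
    intro z hz hzK
    obtain ⟨s, hs, hsz⟩ := hzK
    have h0 : 0 ≤ F z := hsz ▸ hnonneg s hs
    simp only [hUdef, Set.mem_preimage, Set.mem_Iio] at hz
    linarith
  have ht₀U : t₀ ∈ U := by
    simp only [hUdef, Set.mem_preimage, Set.mem_Iio, hFt₀]
    norm_num
  have hUconv : Convex ℝ U :=
    (convex_Iio (0:ℝ)).linear_preimage (F : ℂ →ₗ[ℝ] ℝ)
  have hUsub : U ⊆ connectedComponentIn Kᶜ t₀ :=
    hUconv.isPreconnected.subset_connectedComponentIn ht₀U hUK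
  have ht₀ne : t₀ ≠ 0 := by
    intro h
    rw [h, hFzero] at hFt₀
    norm_num at hFt₀
  have ht₀norm : 0 < ‖t₀‖ := norm_pos_iff.mpr ht₀ne
  refine ⟨Γ, Γ', ?_, ?_, ?_, ?_, t₀, hUK ht₀U, ?_, ?_⟩
  · -- PiecewiseC1
    refine ⟨?_, intervalIntegrable_const, ∅, ?_, ?_⟩
    · exact (Complex.continuous_ofReal.comp
        (continuous_const.add (continuous_id.mul continuous_const))).continuousOn
    · intro s _
      have hg : HasDerivAt (fun s : ℝ => a + s * (b - a)) (b - a) s := by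
        simpa using ((hasDerivAt_id s).mul_const (b - a)).const_add a
      have : HasDerivAt Γ ((b - a : ℝ) : ℂ) s := by
        exact (Complex.ofRealCLM.hasFDerivAt.comp_hasDerivAt s hg)
      exact this.hasDerivWithinAt
    · exact continuousOn_const
  · simp [hΓ]
  · simp [hΓ]
  · -- simple point
    intro s hs hval
    by_contra hcon
    push_neg at hcon
    have hso : s ∈ Set.Ioo (0:ℝ) 1 :=
      ⟨lt_of_le_of_ne hs.1 (Ne.symm hcon.1), lt_of_le_of_ne hs.2 hcon.2⟩
    have := hpos s hso
    rw [hval, hFzero] at this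
    exact lt_irrefl 0 this
  · -- unboundedness
    intro hbdd
    have hUbdd : Bornology.IsBounded U := hbdd.subset hUsub
    obtain ⟨r, hr⟩ := hUbdd.exists_norm_le
    set m : ℝ := (|r| + 1) / ‖t₀‖ with hm
    have hmpos : 0 < m := by positivity
    have hmem : m • t₀ ∈ U := by
      show F (m • t₀) < 0
      rw [F.map_smul, smul_eq_mul, hFt₀]
      nlinarith
    have := hr _ hmem
    rw [norm_smul, Real.norm_eq_abs, abs_of_pos hmpos] at this
    have hmn : m * ‖t₀‖ = |r| + 1 := by
      rw [hm, div_mul_cancel₀ _ (ne_of_gt ht₀norm)]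
    rw [hmn] at this
    have : r ≤ |r| := le_abs_self r
    linarith [le_abs_self r, hr _ hmem]
  · -- 0 in closure
    refine closure_mono hUsub ?_
    rw [Metric.mem_closure_iff]
    intro ε hε
    refine ⟨(ε / (2 * ‖t₀‖)) • t₀, ?_, ?_⟩
    · show F ((ε / (2 * ‖t₀‖)) • t₀) < 0
      rw [F.map_smul, smul_eq_mul, hFt₀]
      have : 0 < ε / (2 * ‖t₀‖) := by positivity
      nlinarith
    · rw [dist_comm, dist_eq_norm, sub_zero, norm_smul, Real.norm_eq_abs,
        abs_of_pos (by positivity : (0:ℝ) < ε / (2 * ‖t₀‖))]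
      rw [div_mul_eq_mul_div, mul_comm (2:ℝ) ‖t₀‖, ← div_div]
      rw [mul_div_assoc, div_self (ne_of_gt ht₀norm)]
      linarith
end
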